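/- arXiv:2311.02295 — 3 statements merged into one kernel-verified Lean document; each statement's English description precedes it below -/
import Mathlib

section
/- Let α be a nonzero complex number and (t_n)_{n∈ℤ} a sequence of positive real numbers such that both (t_n) and (1/t_n) are bounded, and let T = T(t_n, α) be the associated bounded block-shift operator on H ⊕ H. Suppose that: (1) there exists i₀ ∈ ℤ such that for all m, n ∈ ℤ the equality t_n² + 1/t_n² = t_m² + 1/t_m² holds only when m = n or m = −(n + i₀); and (2) for every n ∈ ℤ, t_n ≠ 1 and t_n·t_{n−1} ≠ 1. Then T is irreducible. -/
noncomputable section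

open Complex Metric

/-- `ℓ²(ℤ)` over `ℂ`. -/
abbrev Hl : Type := lp (fun _ : ℤ => ℂ) 2

/-- The standard orthonormal basis of `ℓ²(ℤ)`. -/
def eb (n : ℤ) : Hl := lp.single 2 n 1

/-- The Hilbert space direct sum `H ⊕ H`. -/
abbrev H2 : Type := WithLp 2 (Hl × Hl)

/-- A bounded operator on a Hilbert space is irreducible if the only closed subspaces
invariant under both it and its adjoint are `⊥` and `⊤`. -/
def IsIrreducibleOp {E : Type*} [NormedAddCommGroup E] [InnerProductSpace ℂ E] [CompleteSpace E]
    (A : E →L[ℂ] E) : Prop :=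
  ∀ K : Submodule ℂ E, IsClosed (K : Set E) →
    (∀ x ∈ K, A x ∈ K) → (∀ x ∈ K, ContinuousLinearMap.adjoint A x ∈ K) →
    K = ⊥ ∨ K = ⊤

/-- The block operator `(x, y) ↦ (T₀ x + (X T₁ − T₀ X) y, T₁ y)` on the Hilbert space
direct sum `H₀ ⊕ H₁`. -/
def blockT2 {H0 H1 : Type*} [NormedAddCommGroup H0] [NormedSpace ℂ H0]
    [NormedAddCommGroup H1] [NormedSpace ℂ H1]
    (T0 : H0 →L[ℂ] H0) (T1 : H1 →L[ℂ] H1) (X : H1 →L[ℂ] H0) :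
    WithLp 2 (H0 × H1) →L[ℂ] WithLp 2 (H0 × H1) :=
  let E := WithLp.prodContinuousLinearEquiv 2 ℂ H0 H1
  (E.symm.toContinuousLinearMap).comp
    ((((T0.comp (ContinuousLinearMap.fst ℂ H0 H1)) +
        ((X.comp T1 - T0.comp X).comp (ContinuousLinearMap.snd ℂ H0 H1))).prod
      (T1.comp (ContinuousLinearMap.snd ℂ H0 H1))).comp E.toContinuousLinearMap)

/-- The block operator `T(wₙ, vₙ, dₙ)` on `ℓ²(ℤ) ⊕ ℓ²(ℤ)`. -/
def blockT (T0 T1 X : Hl →L[ℂ] Hl) : H2 →L[ℂ] H2 := blockT2 T0 T1 X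

local notation "⟪" x ", " y "⟫" => @inner ℂ _ _ x y

namespace IrredAux

/-- Sylvester-type lemma for 2x2 blocks: if `Q N = M Q` with `det M = det N = 1`
and `tr M ≠ tr N`, then `Q = 0`. -/
lemma sylvester2 (m11 m12 m21 m22 n11 n12 n21 n22 a b c d : ℂ)
    (hdM : m11*m22 - m12*m21 = 1) (hdN : n11*n22 - n12*n21 = 1)
    (htr : m11 + m22 ≠ n11 + n22)
    (h11 : a*n11 + b*n21 = m11*a + m12*c)
    (h12 : a*n12 + b*n22 = m11*b + m12*d)
    (h21 : c*n11 + d*n21 = m21*a + m22*c)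
    (h22 : c*n12 + d*n22 = m21*b + m22*d) :
    a = 0 ∧ b = 0 ∧ c = 0 ∧ d = 0 := by
  have hτ : (n11 + n22) - (m11 + m22) ≠ 0 := sub_ne_zero.mpr (Ne.symm htr)
  have w11 : m11*a + m12*c = 0 := by
    have h : ((n11 + n22) - (m11 + m22)) * (m11*a + m12*c) = 0 := by
      linear_combination (m11 - n22) * h11 + n21 * h12 + m12 * h21 + a * hdN - a * hdM
    exact (mul_eq_zero.mp h).resolve_left hτ
  have w21 : m21*a + m22*c = 0 := by
    have h : ((n11 + n22) - (m11 + m22)) * (m21*a + m22*c) = 0 := by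
      linear_combination m21 * h11 + (m22 - n22) * h21 + n21 * h22 + c * hdN - c * hdM
    exact (mul_eq_zero.mp h).resolve_left hτ
  have w12 : m11*b + m12*d = 0 := by
    have h : ((n11 + n22) - (m11 + m22)) * (m11*b + m12*d) = 0 := by
      linear_combination n12 * h11 + (m11 - n11) * h12 + m12 * h22 + b * hdN - b * hdM
    exact (mul_eq_zero.mp h).resolve_left hτ
  have w22 : m21*b + m22*d = 0 := by
    have h : ((n11 + n22) - (m11 + m22)) * (m21*b + m22*d) = 0 := by
      linear_combination m21 * h12 + n12 * h21 + (m22 - n11) * h22 + d * hdN - d * hdM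
    exact (mul_eq_zero.mp h).resolve_left hτ
  refine ⟨?_, ?_, ?_, ?_⟩
  · linear_combination m22 * w11 - m12 * w21 - a * hdM
  · linear_combination m22 * w12 - m12 * w22 - b * hdM
  · linear_combination m11 * w21 - m21 * w11 - c * hdM
  · linear_combination m11 * w22 - m21 * w12 - d * hdM

/-- Diagonal-block lemma. -/
lemma diagB (m11 m12 m21 m22 n11 n12 n22 a b c d : ℂ)
    (h1 : a*m11 + b*m21 = m11*a + m12*c)
    (h2 : a*m12 + b*m22 = m11*b + m12*d)
    (h3 : a*n12 + b*n22 = n11*b + n12*d)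
    (hm12 : m12 ≠ 0)
    (hD : n12*(m11 - m22) ≠ m12*(n11 - n22)) :
    b = 0 ∧ c = 0 ∧ a = d := by
  have e1 : m12*(a - d) = b*(m11 - m22) := by linear_combination h2
  have e2 : n12*(a - d) = b*(n11 - n22) := by linear_combination h3
  have hb : b * (n12*(m11 - m22) - m12*(n11 - n22)) = 0 := by
    linear_combination m12 * e2 - n12 * e1
  have hb0 : b = 0 := (mul_eq_zero.mp hb).resolve_right (sub_ne_zero.mpr hD)
  have hc : c = 0 := by
    have : m12 * c = 0 := by linear_combination -h1 + m21 * hb0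
    exact (mul_eq_zero.mp this).resolve_left hm12
  have had : a = d := by
    have : m12 * (a - d) = 0 := by rw [e1, hb0]; ring
    have := (mul_eq_zero.mp this).resolve_left hm12
    linear_combination this
  exact ⟨hb0, hc, had⟩


variable {E : Type*} [NormedAddCommGroup E] [InnerProductSpace ℂ E] [CompleteSpace E]

lemma oP_eq_self {K : Submodule ℂ E} [CompleteSpace K] {v : E} (h : v ∈ K) :
    (K.orthogonalProjection v : E) = v :=
  Submodule.starProjection_eq_self_iff.mpr h

lemma proj_comm (K : Submodule ℂ E) [CompleteSpace K] (A : E →L[ℂ] E)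
    (hK : ∀ x ∈ K, A x ∈ K) (hK' : ∀ x ∈ K, ContinuousLinearMap.adjoint A x ∈ K) :
    ∀ x : E, (K.orthogonalProjection (A x) : E) = A (K.orthogonalProjection x) := by
  intro x
  have hmem : (x - (K.orthogonalProjection x : E)) ∈ Kᗮ :=
    Submodule.sub_starProjection_mem_orthogonal x
  have hAperp : A (x - K.orthogonalProjection x) ∈ Kᗮ := by
    rw [Submodule.mem_orthogonal]
    intro u hu
    rw [← ContinuousLinearMap.adjoint_inner_left]
    exact hmem ((ContinuousLinearMap.adjoint A) u) (hK' u hu)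
  calc (K.orthogonalProjection (A x) : E)
      = (K.orthogonalProjection (A (K.orthogonalProjection x)
          + A (x - K.orthogonalProjection x)) : E) := by
        congr 2; rw [← map_add]; congr 1; abel
    _ = (K.orthogonalProjection (A (K.orthogonalProjection x)) : E)
        + (K.orthogonalProjection (A (x - K.orthogonalProjection x)) : E) := by
        rw [map_add]; rfl
    _ = A (K.orthogonalProjection x) := by
        rw [oP_eq_self
            (hK _ (SetLike.coe_mem (K.orthogonalProjection x))),
          Submodule.orthogonalProjectionOnto_apply_of_mem_orthogonal hAperp]
        simp

end IrredAux

namespace IrredAux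

def Ee (n : ℤ) : H2 := (WithLp.equiv 2 (Hl × Hl)).symm (eb n, 0)
def Ff (n : ℤ) : H2 := (WithLp.equiv 2 (Hl × Hl)).symm (0, eb n)

lemma H2ext {x y : H2} (h1 : x.fst = y.fst) (h2 : x.snd = y.snd) : x = y := by
  apply (WithLp.equiv 2 (Hl × Hl)).injective
  have hx : (WithLp.equiv 2 (Hl × Hl)) x = (x.fst, x.snd) := rfl
  have hy : (WithLp.equiv 2 (Hl × Hl)) y = (y.fst, y.snd) := rfl
  rw [hx, hy, h1, h2]

@[simp] lemma fst_add (x y : H2) : (x + y).fst = x.fst + y.fst := rfl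
@[simp] lemma snd_add (x y : H2) : (x + y).snd = x.snd + y.snd := rfl
@[simp] lemma fst_smul (c : ℂ) (x : H2) : (c • x).fst = c • x.fst := rfl
@[simp] lemma snd_smul (c : ℂ) (x : H2) : (c • x).snd = c • x.snd := rfl
@[simp] lemma fst_smulR (c : ℝ) (x : H2) : (c • x).fst = c • x.fst := rfl
@[simp] lemma snd_smulR (c : ℝ) (x : H2) : (c • x).snd = c • x.snd := rfl

@[simp] lemma Ee_fst (n : ℤ) : (Ee n).fst = eb n := rfl
@[simp] lemma Ee_snd (n : ℤ) : (Ee n).snd = 0 := rfl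
@[simp] lemma Ff_fst (n : ℤ) : (Ff n).fst = 0 := rfl
@[simp] lemma Ff_snd (n : ℤ) : (Ff n).snd = eb n := rfl

lemma inner_eb (m : ℤ) (f : Hl) : ⟪eb m, f⟫ = f m := by
  rw [eb, lp.inner_single_left]; simp

@[simp] lemma eb_apply (m n : ℤ) : (eb n) m = if m = n then 1 else 0 := by
  rw [eb, lp.single_apply]
  split_ifs with h <;> simp [h]

lemma inner_EE (m n : ℤ) : ⟪Ee m, Ee n⟫ = if m = n then 1 else 0 := by
  rw [WithLp.prod_inner_apply]; simp [inner_eb]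
lemma inner_FF (m n : ℤ) : ⟪Ff m, Ff n⟫ = if m = n then 1 else 0 := by
  rw [WithLp.prod_inner_apply]; simp [inner_eb]
lemma inner_EF (m n : ℤ) : ⟪Ee m, Ff n⟫ = 0 := by
  rw [WithLp.prod_inner_apply]; simp [inner_eb]
lemma inner_FE (m n : ℤ) : ⟪Ff m, Ee n⟫ = 0 := by
  rw [WithLp.prod_inner_apply]; simp [inner_eb]

lemma total (w : H2) (hE : ∀ n, ⟪Ee n, w⟫ = 0) (hF : ∀ n, ⟪Ff n, w⟫ = 0) : w = 0 := by
  have h1 : w.fst = 0 := by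
    apply lp.ext; funext i
    have := hE i
    rw [WithLp.prod_inner_apply] at this
    simpa [inner_eb] using this
  have h2 : w.snd = 0 := by
    apply lp.ext; funext i
    have := hF i
    rw [WithLp.prod_inner_apply] at this
    simpa [inner_eb] using this
  exact H2ext h1 h2

section Op
variable (t : ℤ → ℝ) (α : ℂ) (T0 T1 X : Hl →L[ℂ] Hl)
variable (htpos : ∀ n, 0 < t n)
variable (hT0 : ∀ n : ℤ, T0 (eb n) = (t n : ℂ) • eb (n + 1))
variable (hT1 : ∀ n : ℤ, T1 (eb n) = ((t n : ℂ))⁻¹ • eb (n + 1))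
variable (hX : ∀ n : ℤ, X (eb n) = α • eb n)

def bet (n : ℤ) : ℂ := α * (((t n : ℂ))⁻¹ - (t n : ℂ))

lemma TE (hT0 : ∀ n : ℤ, T0 (eb n) = (t n : ℂ) • eb (n + 1)) (n : ℤ) :
    blockT T0 T1 X (Ee n) = (t n : ℂ) • Ee (n + 1) := by
  apply H2ext
  · have h : (blockT T0 T1 X (Ee n)).fst
        = T0 (Ee n).fst + (X (T1 (Ee n).snd) - T0 (X (Ee n).snd)) := rfl
    rw [h, fst_smul]; simp [hT0]
  · have h : (blockT T0 T1 X (Ee n)).snd = T1 (Ee n).snd := rfl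
    rw [h, snd_smul]; simp

lemma TF (hT0 : ∀ n : ℤ, T0 (eb n) = (t n : ℂ) • eb (n + 1))
    (hT1 : ∀ n : ℤ, T1 (eb n) = ((t n : ℂ))⁻¹ • eb (n + 1))
    (hX : ∀ n : ℤ, X (eb n) = α • eb n) (n : ℤ) : blockT T0 T1 X (Ff n)
    = bet t α n • Ee (n + 1) + ((t n : ℂ))⁻¹ • Ff (n + 1) := by
  apply H2ext
  · have h : (blockT T0 T1 X (Ff n)).fst
        = T0 (Ff n).fst + (X (T1 (Ff n).snd) - T0 (X (Ff n).snd)) := rfl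
    rw [h]
    have h2 : ((bet t α n • Ee (n+1) + ((t n : ℂ))⁻¹ • Ff (n+1)) : H2).fst
        = bet t α n • eb (n+1) + ((t n : ℂ))⁻¹ • (0 : Hl) := rfl
    rw [h2]
    rw [Ff_fst, Ff_snd, map_zero, zero_add, hT1 n, map_smul, hX (n+1), hX n, map_smul, hT0 n, bet]
    simp only [smul_zero, add_zero, smul_smul]
    module
  · have h : (blockT T0 T1 X (Ff n)).snd = T1 (Ff n).snd := rfl
    have h2 : ((bet t α n • Ee (n+1) + ((t n : ℂ))⁻¹ • Ff (n+1)) : H2).snd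
        = bet t α n • (0 : Hl) + ((t n : ℂ))⁻¹ • eb (n+1) := rfl
    rw [h, h2]
    simp [hT1]

end Op
end IrredAux

namespace IrredAux
section Op2
variable (t : ℤ → ℝ) (α : ℂ) (T0 T1 X : Hl →L[ℂ] Hl)

lemma adjE (hT0 : ∀ n : ℤ, T0 (eb n) = (t n : ℂ) • eb (n + 1))
    (hT1 : ∀ n : ℤ, T1 (eb n) = ((t n : ℂ))⁻¹ • eb (n + 1))
    (hX : ∀ n : ℤ, X (eb n) = α • eb n) (n : ℤ) :
    ContinuousLinearMap.adjoint (blockT T0 T1 X) (Ee n)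
      = (t (n-1) : ℂ) • Ee (n-1) + (starRingEnd ℂ) (bet t α (n-1)) • Ff (n-1) := by
  apply sub_eq_zero.mp
  apply total
  · intro m
    rw [inner_sub_right, ContinuousLinearMap.adjoint_inner_right, TE t T0 T1 X hT0 m]
    simp only [inner_add_left, inner_add_right, inner_smul_left, inner_smul_right,
      inner_EE, inner_EF, inner_FE, inner_FF, Complex.conj_ofReal, mul_zero, zero_mul,
      add_zero, zero_add, mul_ite, mul_one]
    split_ifs with h1 h2 h2
    · rw [show m = n - 1 by omega]; ring
    · exact (h2 (by omega)).elim
    · exact (h1 (by omega)).elim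
    · ring
  · intro m
    rw [inner_sub_right, ContinuousLinearMap.adjoint_inner_right,
      TF t α T0 T1 X hT0 hT1 hX m]
    simp only [inner_add_left, inner_add_right, inner_smul_left, inner_smul_right,
      inner_EE, inner_EF, inner_FE, inner_FF, Complex.conj_ofReal, mul_zero, zero_mul,
      add_zero, zero_add, mul_ite, mul_one]
    split_ifs with h1 h2 h2
    · rw [show m = n - 1 by omega]; ring
    · exact (h2 (by omega)).elim
    · exact (h1 (by omega)).elim
    · ring

lemma adjF (hT0 : ∀ n : ℤ, T0 (eb n) = (t n : ℂ) • eb (n + 1))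
    (hT1 : ∀ n : ℤ, T1 (eb n) = ((t n : ℂ))⁻¹ • eb (n + 1))
    (hX : ∀ n : ℤ, X (eb n) = α • eb n) (n : ℤ) :
    ContinuousLinearMap.adjoint (blockT T0 T1 X) (Ff n)
      = ((t (n-1) : ℂ))⁻¹ • Ff (n-1) := by
  apply sub_eq_zero.mp
  apply total
  · intro m
    rw [inner_sub_right, ContinuousLinearMap.adjoint_inner_right, TE t T0 T1 X hT0 m,
      inner_smul_left]
    simp [inner_EF, Complex.conj_ofReal]
  · intro m
    rw [inner_sub_right, ContinuousLinearMap.adjoint_inner_right,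
      TF t α T0 T1 X hT0 hT1 hX m]
    simp only [inner_add_left, inner_add_right, inner_smul_left, inner_smul_right,
      inner_EE, inner_EF, inner_FE, inner_FF, Complex.conj_ofReal, map_inv₀,
      mul_zero, zero_mul, add_zero, zero_add, mul_ite, mul_one]
    split_ifs with h1 h2 h2
    · rw [show m = n - 1 by omega]; ring
    · exact (h2 (by omega)).elim
    · exact (h1 (by omega)).elim
    · ring

variable (hT0 : ∀ n : ℤ, T0 (eb n) = (t n : ℂ) • eb (n + 1))
    (hT1 : ∀ n : ℤ, T1 (eb n) = ((t n : ℂ))⁻¹ • eb (n + 1))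
    (hX : ∀ n : ℤ, X (eb n) = α • eb n)


def g11 (k : ℤ) : ℂ := ((t k : ℂ))^2
def g12 (k : ℤ) : ℂ := (t k : ℂ) * bet t α k
def g21 (k : ℤ) : ℂ := (t k : ℂ) * (starRingEnd ℂ) (bet t α k)
def g22 (k : ℤ) : ℂ := bet t α k * (starRingEnd ℂ) (bet t α k) + (((t k : ℂ))^2)⁻¹
def k11 (k : ℤ) : ℂ := ((t (k-1) : ℂ))^2 + bet t α (k-1) * (starRingEnd ℂ) (bet t α (k-1))
def k12 (k : ℤ) : ℂ := bet t α (k-1) * ((t (k-1) : ℂ))⁻¹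
def k21 (k : ℤ) : ℂ := (starRingEnd ℂ) (bet t α (k-1)) * ((t (k-1) : ℂ))⁻¹
def k22 (k : ℤ) : ℂ := (((t (k-1) : ℂ))^2)⁻¹

include hT0 hT1 hX

lemma GE (n : ℤ) :
    ContinuousLinearMap.adjoint (blockT T0 T1 X) (blockT T0 T1 X (Ee n))
      = g11 t n • Ee n + g21 t α n • Ff n := by
  rw [g11, g21]
  rw [TE t T0 T1 X hT0 n, map_smul, adjE t α T0 T1 X hT0 hT1 hX (n+1)]
  simp only [show n + 1 - 1 = n from by ring]
  rw [smul_add, smul_smul, smul_smul, pow_two]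

lemma GF (n : ℤ) :
    ContinuousLinearMap.adjoint (blockT T0 T1 X) (blockT T0 T1 X (Ff n))
      = g12 t α n • Ee n + g22 t α n • Ff n := by
  rw [g12, g22]
  rw [TF t α T0 T1 X hT0 hT1 hX n, map_add, map_smul, map_smul,
    adjE t α T0 T1 X hT0 hT1 hX (n+1), adjF t α T0 T1 X hT0 hT1 hX (n+1)]
  simp only [show n + 1 - 1 = n from by ring]
  rw [smul_add, smul_smul, smul_smul, smul_smul]
  rw [show (((t n : ℂ))^2)⁻¹ = ((t n : ℂ))⁻¹ * ((t n : ℂ))⁻¹ from by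
    rw [pow_two, mul_inv]]
  module

lemma HE (n : ℤ) :
    blockT T0 T1 X (ContinuousLinearMap.adjoint (blockT T0 T1 X) (Ee n))
      = k11 t α n • Ee n + k21 t α n • Ff n := by
  rw [k11, k21]
  rw [adjE t α T0 T1 X hT0 hT1 hX n, map_add, map_smul, map_smul,
    TE t T0 T1 X hT0 (n-1), TF t α T0 T1 X hT0 hT1 hX (n-1)]
  simp only [show n - 1 + 1 = n from by ring]
  rw [pow_two]
  module

lemma HF (n : ℤ) :
    blockT T0 T1 X (ContinuousLinearMap.adjoint (blockT T0 T1 X) (Ff n))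
      = k12 t α n • Ee n + k22 t n • Ff n := by
  rw [k12, k22]
  rw [adjF t α T0 T1 X hT0 hT1 hX n, map_smul, TF t α T0 T1 X hT0 hT1 hX (n-1)]
  simp only [show n - 1 + 1 = n from by ring]
  rw [show ((((t (n-1) : ℂ))^2)⁻¹ : ℂ) = ((t (n-1) : ℂ))⁻¹ * ((t (n-1) : ℂ))⁻¹ from by
    rw [pow_two, mul_inv]]
  module

end Op2

section Scal
variable (t : ℤ → ℝ) (α : ℂ)

lemma sq_ne_one {u : ℝ} (hpos : 0 < u) (h1 : u ≠ 1) : u^2 ≠ 1 := by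
  intro h
  have h3 : (u - 1) * (u + 1) = 0 := by linear_combination h
  rcases mul_eq_zero.mp h3 with h4 | h4
  · exact h1 (by linarith)
  · linarith

lemma conj_g11 (k : ℤ) : (starRingEnd ℂ) (g11 t k) = g11 t k := by
  simp [g11, Complex.conj_ofReal]
lemma conj_g12 (k : ℤ) : (starRingEnd ℂ) (g12 t α k) = g21 t α k := by
  simp [g12, g21, Complex.conj_ofReal]
lemma conj_g21 (k : ℤ) : (starRingEnd ℂ) (g21 t α k) = g12 t α k := by
  simp [g12, g21, Complex.conj_ofReal]
lemma conj_g22 (k : ℤ) : (starRingEnd ℂ) (g22 t α k) = g22 t α k := by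
  simp [g22, Complex.conj_ofReal]; ring
lemma conj_k11 (k : ℤ) : (starRingEnd ℂ) (k11 t α k) = k11 t α k := by
  simp [k11, Complex.conj_ofReal]; ring
lemma conj_k12 (k : ℤ) : (starRingEnd ℂ) (k12 t α k) = k21 t α k := by
  simp [k12, k21, Complex.conj_ofReal]
lemma conj_k21 (k : ℤ) : (starRingEnd ℂ) (k21 t α k) = k12 t α k := by
  simp [k12, k21, Complex.conj_ofReal]
lemma conj_k22 (k : ℤ) : (starRingEnd ℂ) (k22 t k) = k22 t k := by
  simp [k22, Complex.conj_ofReal]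

lemma hbb (k : ℤ) : bet t α k * (starRingEnd ℂ) (bet t α k)
    = ((Complex.normSq α * ((t k)⁻¹ - t k)^2 : ℝ) : ℂ) := by
  rw [bet, map_mul]
  have hw : (starRingEnd ℂ) (((t k : ℂ))⁻¹ - (t k : ℂ)) = ((t k : ℂ))⁻¹ - (t k : ℂ) := by
    simp [map_sub, map_inv₀, Complex.conj_ofReal]
  rw [hw]
  have : α * (((t k : ℂ))⁻¹ - (t k : ℂ)) * ((starRingEnd ℂ) α * (((t k : ℂ))⁻¹ - (t k : ℂ)))
      = (α * (starRingEnd ℂ) α) * (((t k : ℂ))⁻¹ - (t k : ℂ))^2 := by ring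
  rw [this, Complex.mul_conj]
  push_cast
  ring

def trR (k : ℤ) : ℝ := (t k)^2 + Complex.normSq α * ((t k)⁻¹ - t k)^2 + ((t k)^2)⁻¹

lemma trace_g (k : ℤ) : g11 t k + g22 t α k = ((trR t α k : ℝ) : ℂ) := by
  rw [g11, g22, hbb, trR]; push_cast; ring
lemma trace_k (k : ℤ) : k11 t α k + k22 t k = ((trR t α (k-1) : ℝ) : ℂ) := by
  rw [k11, k22, hbb, trR]; push_cast; ring

lemma det_g (k : ℤ) (h : t k ≠ 0) :
    g11 t k * g22 t α k - g12 t α k * g21 t α k = 1 := by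
  have h' : ((t k : ℝ) : ℂ) ≠ 0 := Complex.ofReal_ne_zero.mpr h
  rw [g11, g22, g12, g21]; field_simp; ring
lemma det_k (k : ℤ) (h : t (k-1) ≠ 0) :
    k11 t α k * k22 t k - k12 t α k * k21 t α k = 1 := by
  have h' : ((t (k-1) : ℝ) : ℂ) ≠ 0 := Complex.ofReal_ne_zero.mpr h
  rw [k11, k22, k12, k21]; field_simp; ring

lemma trR_eq (k : ℤ) (h : t k ≠ 0) :
    trR t α k = (1 + Complex.normSq α) * ((t k)^2 + ((t k)^2)⁻¹) - 2 * Complex.normSq α := by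
  rw [trR]; field_simp; ring

lemma g12_ne (k : ℤ) (hpos : 0 < t k) (h1 : t k ≠ 1) (hα : α ≠ 0) : g12 t α k ≠ 0 := by
  rw [g12, bet]
  have h0 : t k ≠ 0 := ne_of_gt hpos
  have hC : ((t k : ℝ) : ℂ) ≠ 0 := Complex.ofReal_ne_zero.mpr h0
  refine mul_ne_zero hC (mul_ne_zero hα ?_)
  have : (((t k : ℂ))⁻¹ - (t k : ℂ)) = (((t k)⁻¹ - t k : ℝ) : ℂ) := by push_cast; ring
  rw [this]
  rw [Ne, Complex.ofReal_eq_zero]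
  intro h
  apply sq_ne_one hpos h1
  field_simp at h
  nlinarith [h]

lemma hD_ne (k : ℤ) (hpos : 0 < t k) (hpos' : 0 < t (k-1)) (h1 : t k ≠ 1)
    (h1' : t (k-1) ≠ 1) (h2 : t k * t (k-1) ≠ 1) (hα : α ≠ 0) :
    k12 t α k * (g11 t k - g22 t α k) ≠ g12 t α k * (k11 t α k - k22 t k) := by
  set u := t k
  set v := t (k-1)
  have hu : u ≠ 0 := ne_of_gt hpos
  have hv : v ≠ 0 := ne_of_gt hpos'
  have huC : ((u : ℝ) : ℂ) ≠ 0 := Complex.ofReal_ne_zero.mpr hu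
  have hvC : ((v : ℝ) : ℂ) ≠ 0 := Complex.ofReal_ne_zero.mpr hv
  set R : ℝ := (1 + Complex.normSq α) * (u^2 - 1) * (v^2 - 1) * (u^2 * v^2 - 1) / (u^2 * v^2)
    with hR
  have key : k12 t α k * (g11 t k - g22 t α k) - g12 t α k * (k11 t α k - k22 t k)
      = α * ((R : ℝ) : ℂ) := by
    rw [k12, g11, g22, g12, k11, k22, hbb, hbb, bet, bet, hR]
    simp only [u, v] at huC hvC ⊢
    push_cast
    field_simp
    ring
  intro heq
  rw [heq] at key
  have : α * ((R : ℝ) : ℂ) = 0 := by linear_combination -key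
  rcases mul_eq_zero.mp this with h | h
  · exact hα h
  · rw [Complex.ofReal_eq_zero] at h
    apply absurd h
    rw [hR]
    apply div_ne_zero
    · apply mul_ne_zero
      apply mul_ne_zero
      apply mul_ne_zero
      · have := Complex.normSq_nonneg α
        intro hz; linarith
      · exact sub_ne_zero.mpr (sq_ne_one hpos h1)
      · exact sub_ne_zero.mpr (sq_ne_one hpos' h1')
      · rw [← mul_pow]
        exact sub_ne_zero.mpr (sq_ne_one (mul_pos hpos hpos') h2)
    · positivity
end Scal
end IrredAux


set_option maxHeartbeats 2000000 in
set_option synthInstance.maxHeartbeats 1000000 in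
open IrredAux in
/-- Proposition 3.1: irreducibility of `T(tₙ, α)`. -/
theorem irreducibility_of_T_t_alpha
    (t : ℤ → ℝ) (htpos : ∀ n, 0 < t n)
    (htb : ∃ C : ℝ, ∀ n, t n ≤ C) (htb' : ∃ C : ℝ, ∀ n, (t n)⁻¹ ≤ C)
    (α : ℂ) (hα : α ≠ 0)
    (T0 T1 X : Hl →L[ℂ] Hl)
    (hT0 : ∀ n : ℤ, T0 (eb n) = (t n : ℂ) • eb (n + 1))
    (hT1 : ∀ n : ℤ, T1 (eb n) = ((t n : ℂ))⁻¹ • eb (n + 1))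
    (hX : ∀ n : ℤ, X (eb n) = α • eb n)
    (hXT : X.comp T1 ≠ T0.comp X)
    (h1 : ∃ i0 : ℤ, ∀ m n : ℤ,
      (t n) ^ 2 + ((t n) ^ 2)⁻¹ = (t m) ^ 2 + ((t m) ^ 2)⁻¹ → m = n ∨ m = -(n + i0))
    (h2 : ∀ n : ℤ, t n ≠ 1 ∧ t n * t (n - 1) ≠ 1) :
    IsIrreducibleOp (blockT T0 T1 X) := by
  classical
  obtain ⟨i0, h1⟩ := h1
  intro K hc hK hK'
  haveI : CompleteSpace K := hc.completeSpace_coe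
  -- the orthogonal projection onto K, as a continuous linear map on H2
  set P2 : H2 →L[ℂ] H2 := K.subtypeL.comp (K.orthogonalProjection) with hP2def
  have hP2app : ∀ x : H2, P2 x = (K.orthogonalProjection x : H2) := fun _ => rfl
  have hadj2 : ∀ x ∈ K, ContinuousLinearMap.adjoint
      (ContinuousLinearMap.adjoint (blockT T0 T1 X)) x ∈ K := by
    intro x hx; rw [ContinuousLinearMap.adjoint_adjoint]; exact hK x hx
  have hcT : ∀ x, P2 (blockT T0 T1 X x) = blockT T0 T1 X (P2 x) := by
    intro x
    exact proj_comm K (blockT T0 T1 X) hK hK' x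
  have hcS : ∀ x, P2 (ContinuousLinearMap.adjoint (blockT T0 T1 X) x)
      = ContinuousLinearMap.adjoint (blockT T0 T1 X) (P2 x) := by
    intro x
    exact proj_comm K (ContinuousLinearMap.adjoint (blockT T0 T1 X)) hK' hadj2 x
  -- paired commutation identities
  have hPT : ∀ v w : H2, ⟪v, P2 (blockT T0 T1 X w)⟫
      = ⟪ContinuousLinearMap.adjoint (blockT T0 T1 X) v, P2 w⟫ := by
    intro v w
    rw [hcT w, ContinuousLinearMap.adjoint_inner_left]
  have hPG : ∀ v w : H2,
      ⟪v, P2 (ContinuousLinearMap.adjoint (blockT T0 T1 X) (blockT T0 T1 X w))⟫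
      = ⟪ContinuousLinearMap.adjoint (blockT T0 T1 X) (blockT T0 T1 X v), P2 w⟫ := by
    intro v w
    rw [hcS, hcT w, ContinuousLinearMap.adjoint_inner_right,
      ContinuousLinearMap.adjoint_inner_left]
  have hPH : ∀ v w : H2,
      ⟪v, P2 (blockT T0 T1 X (ContinuousLinearMap.adjoint (blockT T0 T1 X) w))⟫
      = ⟪blockT T0 T1 X (ContinuousLinearMap.adjoint (blockT T0 T1 X) v), P2 w⟫ := by
    intro v w
    rw [hcT, hcS w, ← ContinuousLinearMap.adjoint_inner_left (blockT T0 T1 X),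
      ContinuousLinearMap.adjoint_inner_right]
  -- expansion helpers
  have hexp : ∀ (c1 c2 : ℂ) (n : ℤ) (v : H2),
      ⟪v, P2 (c1 • Ee n + c2 • Ff n)⟫ = c1 * ⟪v, P2 (Ee n)⟫ + c2 * ⟪v, P2 (Ff n)⟫ := by
    intro c1 c2 n v
    rw [map_add, map_smul, map_smul, inner_add_right, inner_smul_right, inner_smul_right]
  have hexpL : ∀ (c1 c2 : ℂ) (m : ℤ) (w : H2),
      ⟪c1 • Ee m + c2 • Ff m, P2 w⟫
        = (starRingEnd ℂ) c1 * ⟪Ee m, P2 w⟫ + (starRingEnd ℂ) c2 * ⟪Ff m, P2 w⟫ := by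
    intro c1 c2 m w
    rw [inner_add_left, inner_smul_left, inner_smul_left]
  -- the eight entry equations
  have hG1 : ∀ m n : ℤ, g11 t n * ⟪Ee m, P2 (Ee n)⟫ + g21 t α n * ⟪Ee m, P2 (Ff n)⟫
      = g11 t m * ⟪Ee m, P2 (Ee n)⟫ + g12 t α m * ⟪Ff m, P2 (Ee n)⟫ := by
    intro m n
    have h := hPG (Ee m) (Ee n)
    rw [GE t α T0 T1 X hT0 hT1 hX n, GE t α T0 T1 X hT0 hT1 hX m, hexp, hexpL,
      conj_g11, conj_g21] at h
    exact h
  have hG2 : ∀ m n : ℤ, g12 t α n * ⟪Ee m, P2 (Ee n)⟫ + g22 t α n * ⟪Ee m, P2 (Ff n)⟫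
      = g11 t m * ⟪Ee m, P2 (Ff n)⟫ + g12 t α m * ⟪Ff m, P2 (Ff n)⟫ := by
    intro m n
    have h := hPG (Ee m) (Ff n)
    rw [GF t α T0 T1 X hT0 hT1 hX n, GE t α T0 T1 X hT0 hT1 hX m, hexp, hexpL,
      conj_g11, conj_g21] at h
    exact h
  have hG3 : ∀ m n : ℤ, g11 t n * ⟪Ff m, P2 (Ee n)⟫ + g21 t α n * ⟪Ff m, P2 (Ff n)⟫
      = g21 t α m * ⟪Ee m, P2 (Ee n)⟫ + g22 t α m * ⟪Ff m, P2 (Ee n)⟫ := by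
    intro m n
    have h := hPG (Ff m) (Ee n)
    rw [GE t α T0 T1 X hT0 hT1 hX n, GF t α T0 T1 X hT0 hT1 hX m, hexp, hexpL,
      conj_g12, conj_g22] at h
    exact h
  have hG4 : ∀ m n : ℤ, g12 t α n * ⟪Ff m, P2 (Ee n)⟫ + g22 t α n * ⟪Ff m, P2 (Ff n)⟫
      = g21 t α m * ⟪Ee m, P2 (Ff n)⟫ + g22 t α m * ⟪Ff m, P2 (Ff n)⟫ := by
    intro m n
    have h := hPG (Ff m) (Ff n)
    rw [GF t α T0 T1 X hT0 hT1 hX n, GF t α T0 T1 X hT0 hT1 hX m, hexp, hexpL,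
      conj_g12, conj_g22] at h
    exact h
  have hH1 : ∀ m n : ℤ, k11 t α n * ⟪Ee m, P2 (Ee n)⟫ + k21 t α n * ⟪Ee m, P2 (Ff n)⟫
      = k11 t α m * ⟪Ee m, P2 (Ee n)⟫ + k12 t α m * ⟪Ff m, P2 (Ee n)⟫ := by
    intro m n
    have h := hPH (Ee m) (Ee n)
    rw [HE t α T0 T1 X hT0 hT1 hX n, HE t α T0 T1 X hT0 hT1 hX m, hexp, hexpL,
      conj_k11, conj_k21] at h
    exact h
  have hH2 : ∀ m n : ℤ, k12 t α n * ⟪Ee m, P2 (Ee n)⟫ + k22 t n * ⟪Ee m, P2 (Ff n)⟫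
      = k11 t α m * ⟪Ee m, P2 (Ff n)⟫ + k12 t α m * ⟪Ff m, P2 (Ff n)⟫ := by
    intro m n
    have h := hPH (Ee m) (Ff n)
    rw [HF t α T0 T1 X hT0 hT1 hX n, HE t α T0 T1 X hT0 hT1 hX m, hexp, hexpL,
      conj_k11, conj_k21] at h
    exact h
  have hH3 : ∀ m n : ℤ, k11 t α n * ⟪Ff m, P2 (Ee n)⟫ + k21 t α n * ⟪Ff m, P2 (Ff n)⟫
      = k21 t α m * ⟪Ee m, P2 (Ee n)⟫ + k22 t m * ⟪Ff m, P2 (Ee n)⟫ := by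
    intro m n
    have h := hPH (Ff m) (Ee n)
    rw [HE t α T0 T1 X hT0 hT1 hX n, HF t α T0 T1 X hT0 hT1 hX m, hexp, hexpL,
      conj_k12, conj_k22] at h
    exact h
  have hH4 : ∀ m n : ℤ, k12 t α n * ⟪Ff m, P2 (Ee n)⟫ + k22 t n * ⟪Ff m, P2 (Ff n)⟫
      = k21 t α m * ⟪Ee m, P2 (Ff n)⟫ + k22 t m * ⟪Ff m, P2 (Ff n)⟫ := by
    intro m n
    have h := hPH (Ff m) (Ff n)
    rw [HF t α T0 T1 X hT0 hT1 hX n, HF t α T0 T1 X hT0 hT1 hX m, hexp, hexpL,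
      conj_k12, conj_k22] at h
    exact h
  -- traces distinguish blocks
  have hA2 : (0:ℝ) < 1 + Complex.normSq α := by
    have := Complex.normSq_nonneg α; linarith
  have htrR : ∀ m n : ℤ, trR t α m = trR t α n → m = n ∨ m = -(n + i0) := by
    intro m n h
    rw [trR_eq t α m (ne_of_gt (htpos m)), trR_eq t α n (ne_of_gt (htpos n))] at h
    have h' : (1 + Complex.normSq α) * ((t m)^2 + ((t m)^2)⁻¹)
        = (1 + Complex.normSq α) * ((t n)^2 + ((t n)^2)⁻¹) := by linarith
    exact h1 m n (mul_left_cancel₀ (ne_of_gt hA2) h').symm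
  -- off-diagonal entries vanish
  have hZ : ∀ m n : ℤ, m ≠ n →
      ⟪Ee m, P2 (Ee n)⟫ = 0 ∧ ⟪Ee m, P2 (Ff n)⟫ = 0 ∧
      ⟪Ff m, P2 (Ee n)⟫ = 0 ∧ ⟪Ff m, P2 (Ff n)⟫ = 0 := by
    intro m n hmn
    by_cases htr : trR t α m = trR t α n
    · -- use the H equations
      have hm1 : m = -(n + i0) := (htrR m n htr).resolve_left hmn
      have htr' : trR t α (m-1) ≠ trR t α (n-1) := by
        intro hcon
        rcases htrR (m-1) (n-1) hcon with h | h
        · omega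
        · omega
      refine sylvester2 (k11 t α m) (k12 t α m) (k21 t α m) (k22 t m)
        (k11 t α n) (k12 t α n) (k21 t α n) (k22 t n)
        (⟪Ee m, P2 (Ee n)⟫) (⟪Ee m, P2 (Ff n)⟫) (⟪Ff m, P2 (Ee n)⟫) (⟪Ff m, P2 (Ff n)⟫)
        (det_k t α m (ne_of_gt (htpos (m-1)))) (det_k t α n (ne_of_gt (htpos (n-1))))
        ?_ (by linear_combination hH1 m n) (by linear_combination hH2 m n)
        (by linear_combination hH3 m n) (by linear_combination hH4 m n)
      rw [trace_k, trace_k, Ne, Complex.ofReal_inj]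
      exact htr'
    · refine sylvester2 (g11 t m) (g12 t α m) (g21 t α m) (g22 t α m)
        (g11 t n) (g12 t α n) (g21 t α n) (g22 t α n)
        (⟪Ee m, P2 (Ee n)⟫) (⟪Ee m, P2 (Ff n)⟫) (⟪Ff m, P2 (Ee n)⟫) (⟪Ff m, P2 (Ff n)⟫)
        (det_g t α m (ne_of_gt (htpos m))) (det_g t α n (ne_of_gt (htpos n)))
        ?_ (by linear_combination hG1 m n) (by linear_combination hG2 m n)
        (by linear_combination hG3 m n) (by linear_combination hG4 m n)
      rw [trace_g, trace_g, Ne, Complex.ofReal_inj]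
      exact htr
  -- diagonal blocks are scalar
  have hDiag : ∀ n : ℤ, ⟪Ee n, P2 (Ff n)⟫ = 0 ∧ ⟪Ff n, P2 (Ee n)⟫ = 0 ∧
      ⟪Ee n, P2 (Ee n)⟫ = ⟪Ff n, P2 (Ff n)⟫ := by
    intro n
    refine diagB (g11 t n) (g12 t α n) (g21 t α n) (g22 t α n)
      (k11 t α n) (k12 t α n) (k22 t n)
      (⟪Ee n, P2 (Ee n)⟫) (⟪Ee n, P2 (Ff n)⟫) (⟪Ff n, P2 (Ee n)⟫) (⟪Ff n, P2 (Ff n)⟫)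
      (by linear_combination hG1 n n) (by linear_combination hG2 n n)
      (by linear_combination hH2 n n)
      (g12_ne t α n (htpos n) (h2 n).1 hα)
      (hD_ne t α n (htpos n) (htpos (n-1)) (h2 n).1 (h2 (n-1)).1 (h2 n).2 hα)
  -- the diagonal is constant
  have hstep : ∀ n : ℤ, ⟪Ee (n+1), P2 (Ee (n+1))⟫ = ⟪Ee n, P2 (Ee n)⟫ := by
    intro n
    have h := hPT (Ee (n+1)) (Ee n)
    rw [TE t T0 T1 X hT0 n, adjE t α T0 T1 X hT0 hT1 hX (n+1)] at h
    simp only [show n + 1 - 1 = n from by ring] at h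
    rw [map_smul, inner_smul_right, hexpL, Complex.conj_ofReal, Complex.conj_conj,
      (hDiag n).2.1] at h
    have htn : ((t n : ℝ) : ℂ) ≠ 0 := Complex.ofReal_ne_zero.mpr (ne_of_gt (htpos n))
    apply mul_left_cancel₀ htn
    rw [h]; ring
  have hconst : ∀ n : ℤ, ⟪Ee n, P2 (Ee n)⟫ = ⟪Ee 0, P2 (Ee 0)⟫ := by
    intro n
    induction n using Int.induction_on with
    | zero => rfl
    | succ i ih => rw [hstep i]; exact ih
    | pred i ih =>
        have h := hstep (-(i:ℤ) - 1)
        rw [show (-(i:ℤ) - 1) + 1 = -(i:ℤ) from by ring] at h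
        rw [← h]; exact ih
  set c0 : ℂ := ⟪Ee 0, P2 (Ee 0)⟫ with hc0def
  -- P2 acts as c0 • id on the basis vectors
  have hPE : ∀ n : ℤ, P2 (Ee n) = c0 • Ee n := by
    intro n
    apply sub_eq_zero.mp
    apply total
    · intro m
      rw [inner_sub_right, inner_smul_right, inner_EE]
      by_cases hmn : m = n
      · subst hmn; rw [hconst m]; simp
      · rw [(hZ m n hmn).1]; simp [hmn]
    · intro m
      rw [inner_sub_right, inner_smul_right, inner_FE]
      by_cases hmn : m = n
      · subst hmn; rw [(hDiag m).2.1]; simp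
      · rw [(hZ m n hmn).2.2.1]; simp
  have hPF : ∀ n : ℤ, P2 (Ff n) = c0 • Ff n := by
    intro n
    apply sub_eq_zero.mp
    apply total
    · intro m
      rw [inner_sub_right, inner_smul_right, inner_EF]
      by_cases hmn : m = n
      · subst hmn; rw [(hDiag m).1]; simp
      · rw [(hZ m n hmn).2.1]; simp
    · intro m
      rw [inner_sub_right, inner_smul_right, inner_FF]
      by_cases hmn : m = n
      · subst hmn; rw [← (hDiag m).2.2, hconst m]; simp
      · rw [(hZ m n hmn).2.2.2]; simp [hmn]
  -- density of the span of the basis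
  have hdense : Dense ((Submodule.span ℂ (Set.range Ee ∪ Set.range Ff) : Submodule ℂ H2)
      : Set H2) := by
    rw [Submodule.dense_iff_topologicalClosure_eq_top,
      Submodule.topologicalClosure_eq_top_iff, Submodule.eq_bot_iff]
    intro w hw
    apply total
    · intro n
      exact (Submodule.mem_orthogonal _ w).mp hw (Ee n)
        (Submodule.subset_span (Or.inl ⟨n, rfl⟩))
    · intro n
      exact (Submodule.mem_orthogonal _ w).mp hw (Ff n)
        (Submodule.subset_span (Or.inr ⟨n, rfl⟩))
  have hP2all : ∀ x : H2, P2 x = c0 • x := by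
    have heq : P2 = c0 • ContinuousLinearMap.id ℂ H2 := by
      apply ContinuousLinearMap.ext_on hdense
      rintro x (⟨n, rfl⟩ | ⟨n, rfl⟩)
      · simpa using hPE n
      · simpa using hPF n
    intro x
    rw [heq]; rfl
  -- c0 is 0 or 1
  have hidem : c0 * c0 = c0 := by
    have h : P2 (P2 (Ee 0)) = P2 (Ee 0) := by
      rw [hP2app (P2 (Ee 0))]
      exact oP_eq_self (by rw [hP2app]; exact SetLike.coe_mem _)
    rw [hP2all (Ee 0), map_smul, hP2all (Ee 0)] at h
    have h2' : (c0 * c0 - c0) • Ee 0 = 0 := by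
      rw [sub_smul, mul_smul, h, sub_self]
    have hE0 : (Ee 0 : H2) ≠ 0 := by
      intro hcon
      have := inner_EE 0 0
      rw [hcon] at this
      simp at this
    have := (smul_eq_zero.mp h2').resolve_right hE0
    linear_combination this
  rcases mul_eq_zero.mp (show c0 * (c0 - 1) = 0 from by linear_combination hidem) with h | h
  · left
    rw [Submodule.eq_bot_iff]
    intro x hx
    have hfix : P2 x = x := by
      rw [hP2app, oP_eq_self hx]
    rw [hP2all x, h, zero_smul] at hfix
    exact hfix.symm
  · right
    rw [Submodule.eq_top_iff']
    intro x
    have hmem : P2 x ∈ K := by rw [hP2app]; exact SetLike.coe_mem _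
    rw [hP2all x, show c0 = 1 from by linear_combination h, one_smul] at hmem
    exact hmem
end
end

section
/- Let (w_n)_{n∈ℤ} and (v_n)_{n∈ℤ} be sequences of complex numbers with |w_n| = |v_n| = 1 for all n, let α be a nonzero complex number, and let T = T(w_n, v_n, α) be the associated bounded block-shift operator on H ⊕ H (i.e. with d_n = α for all n). Suppose there exists i₀ ∈ ℤ such that for all m, n ∈ ℤ the equality |w_n − v_n|² = |w_m − v_m|² holds only when m = n or m = −(n + i₀). If for every n ∈ ℤ at least one of the following holds, where c_n = w_n − v_n: (1) w_n·w_{n−1}·conj(c_n)·conj(c_{n−1}) is not a real number; (2) (1 − w_n·conj(v_n))·|w_{n−1} − v_{n−1}|² ≠ (1 − conj(w_{n−1})·v_{n−1})·|w_n − v_n|²; then T is irreducible. -/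
noncomputable section

open Complex Metric

open ComplexConjugate

def E0 (n : ℤ) : H2 := (WithLp.equiv 2 (Hl × Hl)).symm (eb n, 0)
def E1 (n : ℤ) : H2 := (WithLp.equiv 2 (Hl × Hl)).symm (0, eb n)

lemma inner_eb_left (n : ℤ) (f : Hl) : (inner ℂ (eb n) f : ℂ) = f n := by
  rw [eb, lp.inner_single_left]; simp [RCLike.inner_apply]

lemma eb_apply (n k : ℤ) : (eb n) k = if k = n then 1 else 0 := by
  rw [eb, lp.single_apply]
  split_ifs with h <;> simp [h]

lemma inner_E0_left (n : ℤ) (z : H2) : (inner ℂ (E0 n) z : ℂ) = z.fst n := by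
  rw [WithLp.prod_inner_apply]
  simp [E0, inner_eb_left]

lemma inner_E1_left (n : ℤ) (z : H2) : (inner ℂ (E1 n) z : ℂ) = z.snd n := by
  rw [WithLp.prod_inner_apply]
  simp [E1, inner_eb_left]

lemma Hl_ext (u u' : Hl) (h : ∀ k : ℤ, (inner ℂ (eb k) u : ℂ) = inner ℂ (eb k) u') : u = u' := by
  apply lp.ext
  funext k
  simpa [inner_eb_left] using h k

lemma H2_ext (z z' : H2) (h0 : ∀ k : ℤ, (inner ℂ (E0 k) z : ℂ) = inner ℂ (E0 k) z')
    (h1 : ∀ k : ℤ, (inner ℂ (E1 k) z : ℂ) = inner ℂ (E1 k) z') : z = z' := by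
  apply (WithLp.equiv 2 (Hl × Hl)).injective
  apply Prod.ext
  · exact Hl_ext _ _ (by have h := h0; simp only [inner_E0_left, inner_eb_left] at h ⊢; exact h)
  · exact Hl_ext _ _ (by have h := h1; simp only [inner_E1_left, inner_eb_left] at h ⊢; exact h)

lemma blockT_fst (T0 T1 X : Hl →L[ℂ] Hl) (z : H2) :
    (blockT T0 T1 X z).fst = T0 z.fst + (X (T1 z.snd) - T0 (X z.snd)) := rfl
lemma blockT_snd (T0 T1 X : Hl →L[ℂ] Hl) (z : H2) :
    (blockT T0 T1 X z).snd = T1 z.snd := rfl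

lemma adj_shift (u : ℤ → ℂ) (T : Hl →L[ℂ] Hl) (hT : ∀ n : ℤ, T (eb n) = u n • eb (n + 1))
    (m : ℤ) : ContinuousLinearMap.adjoint T (eb m) = conj (u (m - 1)) • eb (m - 1) := by
  apply lp.ext; funext k
  have h1 : (ContinuousLinearMap.adjoint T (eb m)) k
      = (inner ℂ (eb k) (ContinuousLinearMap.adjoint T (eb m)) : ℂ) := (inner_eb_left _ _).symm
  rw [h1, ContinuousLinearMap.adjoint_inner_right, hT, inner_smul_left, inner_eb_left]
  have h2 : ((conj (u (m-1)) • eb (m - 1)) : Hl) k = conj (u (m-1)) * (eb (m-1)) k := rfl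
  rw [h2, eb, eb]
  rcases eq_or_ne (k + 1) m with h | h
  · rw [lp.single_apply, lp.single_apply]
    have h3 : k = m - 1 := by omega
    simp [h, h3]
  · rw [lp.single_apply, lp.single_apply]
    have h3 : ¬ (k = m - 1) := by omega
    simp [h, h3]

lemma inner_eb_shift (u : ℤ → ℂ) (T : Hl →L[ℂ] Hl) (hT : ∀ n : ℤ, T (eb n) = u n • eb (n + 1))
    (m : ℤ) (f : Hl) : (inner ℂ (eb m) (T f) : ℂ) = u (m - 1) * f (m - 1) := by
  rw [← ContinuousLinearMap.adjoint_inner_left, adj_shift u T hT, inner_smul_left,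
    inner_eb_left]
  simp

lemma coord_shift (u : ℤ → ℂ) (T : Hl →L[ℂ] Hl) (hT : ∀ n : ℤ, T (eb n) = u n • eb (n + 1))
    (m : ℤ) (f : Hl) : (T f) m = u (m - 1) * f (m - 1) := by
  rw [← inner_eb_left, inner_eb_shift u T hT]

lemma adj_diag (α : ℂ) (X : Hl →L[ℂ] Hl) (hX : ∀ n : ℤ, X (eb n) = α • eb n)
    (m : ℤ) : ContinuousLinearMap.adjoint X (eb m) = conj α • eb m := by
  apply lp.ext; funext k
  have h1 : (ContinuousLinearMap.adjoint X (eb m)) k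
      = (inner ℂ (eb k) (ContinuousLinearMap.adjoint X (eb m)) : ℂ) := (inner_eb_left _ _).symm
  rw [h1, ContinuousLinearMap.adjoint_inner_right, hX, inner_smul_left, inner_eb_left]
  have h2 : ((conj α • eb m) : Hl) k = conj α * (eb m) k := rfl
  rw [h2, eb_apply]

lemma coord_diag (α : ℂ) (X : Hl →L[ℂ] Hl) (hX : ∀ n : ℤ, X (eb n) = α • eb n)
    (m : ℤ) (f : Hl) : (X f) m = α * f m := by
  rw [← inner_eb_left, ← ContinuousLinearMap.adjoint_inner_left, adj_diag α X hX,
    inner_smul_left, inner_eb_left]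
  simp

private lemma int_invariant {β : Type*} {f : ℤ → β} (h : ∀ n, f (n+1) = f n) (m n : ℤ) :
    f m = f n := by
  have key : ∀ j : ℤ, ∀ p : ℤ, f (p + j) = f p := by
    intro j
    induction j using Int.induction_on with
    | zero => simp
    | succ k ih =>
        intro p
        rw [show p + ((k:ℤ)+1) = (p+(k:ℤ))+1 by ring, h, ih]
    | pred k ih =>
        intro p
        have h2 := h (p + (-(k:ℤ)-1))
        rw [show p + (-(k:ℤ)-1) + 1 = p + -(k:ℤ) by ring] at h2
        rw [← h2, ih]
  rw [show m = n + (m - n) by ring, key]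

private lemma key_alg (w v : ℤ → ℂ) (hwn : ∀ n, ‖w n‖ = 1) (hvn : ∀ n, ‖v n‖ = 1)
    (α : ℂ) (hα : α ≠ 0) (hc : ∀ n : ℤ, w n - v n ≠ 0) (i0 : ℤ)
    (h1 : ∀ m n : ℤ, ‖w n - v n‖ ^ 2 = ‖w m - v m‖ ^ 2 → m = n ∨ m = -(n + i0))
    (A B C D : ℤ → ℤ → ℂ)
    (S1 : ∀ m n, A m n = conj (A n m))
    (S2 : ∀ m n, D m n = conj (D n m))
    (S3 : ∀ m n, C m n = conj (B n m))
    (R1 : ∀ m n, w n * A m (n+1) = w (m-1) * A (m-1) n - α * (w (m-1) - v (m-1)) * C (m-1) n)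
    (R2 : ∀ m n, -(α * (w n - v n)) * A m (n+1) + v n * B m (n+1)
        = w (m-1) * B (m-1) n - α * (w (m-1) - v (m-1)) * D (m-1) n)
    (R3 : ∀ m n, w n * C m (n+1) = v (m-1) * C (m-1) n)
    (R4 : ∀ m n, -(α * (w n - v n)) * C m (n+1) + v n * D m (n+1) = v (m-1) * D (m-1) n) :
    ∃ lam : ℂ, (∀ m n, A m n = if m = n then lam else 0)
      ∧ (∀ m n, B m n = 0) ∧ (∀ m n, C m n = 0)
      ∧ (∀ m n, D m n = if m = n then lam else 0) := by
  -- basic nonvanishing facts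
  have hw0 : ∀ n, w n ≠ 0 := fun n h => by simpa [h] using hwn n
  have hv0 : ∀ n, v n ≠ 0 := fun n h => by simpa [h] using hvn n
  have huw : ∀ n, conj (w n) * w n = 1 := by
    intro n
    rw [mul_comm, Complex.mul_conj', hwn n]; norm_num
  have huv : ∀ n, conj (v n) * v n = 1 := by
    intro n
    rw [mul_comm, Complex.mul_conj', hvn n]; norm_num
  have hα' : conj α ≠ 0 := by simpa using hα
  have hcc : ∀ n : ℤ, conj (w n) - conj (v n) ≠ 0 := by
    intro n h
    apply hc n
    have h2 : conj (w n - v n) = 0 := by rw [map_sub]; exact h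
    simpa using congrArg conj h2
  have hnorm : ∀ x y : ℂ, x * conj x = y * conj y → ‖x‖ ^ 2 = ‖y‖ ^ 2 := by
    intro x y h
    rw [Complex.mul_conj', Complex.mul_conj'] at h
    exact_mod_cast h
  -- Step (★)
  have star1 : ∀ m n : ℤ, (conj (w m) - conj (v m)) * A (m+1) n
      = (conj (w (n-1)) - conj (v (n-1))) * D m (n-1) := by
    intro m n
    have h2 := congrArg conj (R2 n m)
    simp only [map_add, map_mul, map_sub, map_neg] at h2
    rw [← S1 (m+1) n, ← S3 (m+1) n, ← S3 m (n-1), ← S2 m (n-1)] at h2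
    have h3 := R3 (m+1) (n-1)
    simp only [add_sub_cancel_right, sub_add_cancel] at h3
    have goal' : conj α * ((conj (w m) - conj (v m)) * A (m+1) n)
        = conj α * ((conj (w (n-1)) - conj (v (n-1))) * D m (n-1)) := by
      linear_combination (-1 : ℂ) * h2 + conj (v m) * conj (w (n-1)) * h3
        - conj (v m) * C (m+1) n * huw (n-1) + conj (w (n-1)) * C m (n-1) * huv m
    exact mul_left_cancel₀ hα' goal'
  have star2 : ∀ m n : ℤ, (w m - v m) * A n (m+1) = (w (n-1) - v (n-1)) * D (n-1) m := by
    intro m n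
    have h2 := congrArg conj (star1 m n)
    simp only [map_mul, map_sub] at h2
    rw [← S1 n (m+1), ← S2 (n-1) m] at h2
    simpa using h2
  -- support of A
  have hAsupp : ∀ m n : ℤ, m ≠ n → m + n ≠ 2 - i0 → A m n = 0 := by
    intro m n hmn hsum
    by_contra hA
    have e1 := star1 (m-1) n
    simp only [sub_add_cancel] at e1
    have e2 := star2 (n-1) m
    simp only [sub_add_cancel] at e2
    have key : ((w (n-1) - v (n-1)) * (conj (w (n-1)) - conj (v (n-1)))
        - (w (m-1) - v (m-1)) * (conj (w (m-1)) - conj (v (m-1)))) * A m n = 0 := by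
      linear_combination (conj (w (n-1)) - conj (v (n-1))) * e2 - (w (m-1) - v (m-1)) * e1
    rcases mul_eq_zero.1 key with h | h
    · have hcnorm : ‖w (n-1) - v (n-1)‖ ^ 2 = ‖w (m-1) - v (m-1)‖ ^ 2 := by
        apply hnorm
        simp only [map_sub]
        linear_combination h
      rcases h1 (m-1) (n-1) hcnorm with h' | h' <;> omega
    · exact hA h
  -- support of D
  have hDsupp : ∀ m n : ℤ, m ≠ n → m + n ≠ -i0 → D m n = 0 := by
    intro m n hmn hsum
    by_contra hD
    have e1 := star1 m (n+1)
    simp only [add_sub_cancel_right] at e1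
    have e2 := star2 n (m+1)
    simp only [add_sub_cancel_right] at e2
    have key : ((w n - v n) * (conj (w n) - conj (v n))
        - (w m - v m) * (conj (w m) - conj (v m))) * D m n = 0 := by
      linear_combination (conj (w m) - conj (v m)) * e2 - (w n - v n) * e1
    rcases mul_eq_zero.1 key with h | h
    · have hcnorm : ‖w n - v n‖ ^ 2 = ‖w m - v m‖ ^ 2 := by
        apply hnorm
        simp only [map_sub]
        linear_combination h
      rcases h1 m n hcnorm with h' | h' <;> omega
    · exact hD h
  -- C propagation along diagonals
  have Cstep : ∀ p q : ℤ, C p q = 0 ↔ C (p+1) (q+1) = 0 := by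
    intro p q
    have h3 := R3 (p+1) q
    simp only [add_sub_cancel_right] at h3
    constructor
    · intro h
      rw [h, mul_zero] at h3
      exact (mul_eq_zero.1 h3).resolve_left (hw0 q)
    · intro h
      rw [h, mul_zero] at h3
      exact (mul_eq_zero.1 h3.symm).resolve_left (hv0 p)
  have Cdiag : ∀ (j : ℤ) (p q : ℤ), C p q = 0 ↔ C (p+j) (q+j) = 0 := by
    intro j
    induction j using Int.induction_on with
    | zero => simp
    | succ k ih =>
        intro p q
        rw [ih p q, show p + ((k:ℤ)+1) = (p+(k:ℤ))+1 by ring,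
          show q + ((k:ℤ)+1) = (q+(k:ℤ))+1 by ring]
        exact Cstep _ _
    | pred k ih =>
        intro p q
        have e2 := Cstep (p + (-(k:ℤ)-1)) (q + (-(k:ℤ)-1))
        rw [show p + (-(k:ℤ)-1) + 1 = p + -(k:ℤ) by ring,
          show q + (-(k:ℤ)-1) + 1 = q + -(k:ℤ) by ring] at e2
        exact (ih p q).trans e2.symm
  -- off-diagonal C vanishes
  have hCoff : ∀ p q : ℤ, p ≠ q → C p q = 0 := by
    intro p q hpq
    have hs : ∃ j : ℤ, 0 < j ∧ 2*j ≠ 2 - i0 - p - q ∧ 2*j ≠ -i0 - p - q := by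
      refine ⟨(2 - i0 - p - q).natAbs + (-i0 - p - q).natAbs + 1, by positivity, by omega, by omega⟩
    obtain ⟨j, hj0, hj1, hj2⟩ := hs
    rw [Cdiag j p q]
    have hA1 : A (p+j) (q+j) = 0 := hAsupp _ _ (by omega) (by omega)
    have hA2 : A (p+j+1) (q+j+1) = 0 := hAsupp _ _ (by omega) (by omega)
    have hR := R1 (p+j+1) (q+j)
    simp only [add_sub_cancel_right] at hR
    rw [hA1, hA2, mul_zero, mul_zero, zero_sub] at hR
    have h5 : α * (w (p+j) - v (p+j)) * C (p+j) (q+j) = 0 := by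
      rw [← neg_eq_zero]; exact hR.symm
    exact (mul_eq_zero.1 h5).resolve_left (mul_ne_zero hα (hc _))
  -- off-diagonal A vanishes
  have Astep : ∀ p q : ℤ, p ≠ q → (A p q = 0 ↔ A (p+1) (q+1) = 0) := by
    intro p q hpq
    have hR := R1 (p+1) q
    simp only [add_sub_cancel_right] at hR
    rw [hCoff p q hpq, mul_zero, sub_zero] at hR
    constructor
    · intro h
      rw [h, mul_zero] at hR
      exact (mul_eq_zero.1 hR).resolve_left (hw0 q)
    · intro h
      rw [h, mul_zero] at hR
      exact (mul_eq_zero.1 hR.symm).resolve_left (hw0 p)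
  have Adiag : ∀ (j : ℤ) (p q : ℤ), p ≠ q → (A p q = 0 ↔ A (p+j) (q+j) = 0) := by
    intro j
    induction j using Int.induction_on with
    | zero => simp
    | succ k ih =>
        intro p q hpq
        rw [ih p q hpq, show p + ((k:ℤ)+1) = (p+(k:ℤ))+1 by ring,
          show q + ((k:ℤ)+1) = (q+(k:ℤ))+1 by ring]
        exact Astep _ _ (by omega)
    | pred k ih =>
        intro p q hpq
        have e2 := Astep (p + (-(k:ℤ)-1)) (q + (-(k:ℤ)-1)) (by omega)
        rw [show p + (-(k:ℤ)-1) + 1 = p + -(k:ℤ) by ring,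
          show q + (-(k:ℤ)-1) + 1 = q + -(k:ℤ) by ring] at e2
        exact (ih p q hpq).trans e2.symm
  have hAoff : ∀ p q : ℤ, p ≠ q → A p q = 0 := by
    intro p q hpq
    have hs : ∃ j : ℤ, 2*j ≠ 2 - i0 - p - q := ⟨(2 - i0 - p - q).natAbs + 1, by omega⟩
    obtain ⟨j, hj1⟩ := hs
    rw [Adiag j p q hpq]
    exact hAsupp _ _ (by omega) (by omega)
  -- off-diagonal D vanishes
  have Dstep : ∀ p q : ℤ, p ≠ q → (D p q = 0 ↔ D (p+1) (q+1) = 0) := by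
    intro p q hpq
    have hR := R4 (p+1) q
    simp only [add_sub_cancel_right] at hR
    rw [hCoff (p+1) (q+1) (by omega), mul_zero, zero_add] at hR
    constructor
    · intro h
      rw [h, mul_zero] at hR
      exact (mul_eq_zero.1 hR).resolve_left (hv0 q)
    · intro h
      rw [h, mul_zero] at hR
      exact (mul_eq_zero.1 hR.symm).resolve_left (hv0 p)
  have Ddiag : ∀ (j : ℤ) (p q : ℤ), p ≠ q → (D p q = 0 ↔ D (p+j) (q+j) = 0) := by
    intro j
    induction j using Int.induction_on with
    | zero => simp
    | succ k ih =>
        intro p q hpq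
        rw [ih p q hpq, show p + ((k:ℤ)+1) = (p+(k:ℤ))+1 by ring,
          show q + ((k:ℤ)+1) = (q+(k:ℤ))+1 by ring]
        exact Dstep _ _ (by omega)
    | pred k ih =>
        intro p q hpq
        have e2 := Dstep (p + (-(k:ℤ)-1)) (q + (-(k:ℤ)-1)) (by omega)
        rw [show p + (-(k:ℤ)-1) + 1 = p + -(k:ℤ) by ring,
          show q + (-(k:ℤ)-1) + 1 = q + -(k:ℤ) by ring] at e2
        exact (ih p q hpq).trans e2.symm
  have hDoff : ∀ p q : ℤ, p ≠ q → D p q = 0 := by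
    intro p q hpq
    have hs : ∃ j : ℤ, 2*j ≠ -i0 - p - q := ⟨(-i0 - p - q).natAbs + 1, by omega⟩
    obtain ⟨j, hj1⟩ := hs
    rw [Ddiag j p q hpq]
    exact hDsupp _ _ (by omega) (by omega)
  -- diagonal relations
  have f1 : ∀ n : ℤ, A n n = D (n-1) (n-1) := by
    intro n
    have e1 := star1 (n-1) n
    simp only [sub_add_cancel] at e1
    exact mul_left_cancel₀ (hcc (n-1)) e1
  have f2 : ∀ n : ℤ, α * (w n - v n) * C n n = w n * (D (n-1) (n-1) - D n n) := by
    intro n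
    have hR := R1 (n+1) n
    simp only [add_sub_cancel_right] at hR
    rw [f1 n, f1 (n+1)] at hR
    simp only [add_sub_cancel_right] at hR
    linear_combination hR
  have f3 : ∀ n : ℤ, α * (w n - v n) * C (n+1) (n+1) = v n * (D (n+1) (n+1) - D n n) := by
    intro n
    have hR := R4 (n+1) n
    simp only [add_sub_cancel_right] at hR
    linear_combination -hR
  have f4 : ∀ n : ℤ, w n * C (n+1) (n+1) = v n * C n n := by
    intro n
    have hR := R3 (n+1) n
    simp only [add_sub_cancel_right] at hR
    exact hR
  have f5 : ∀ n : ℤ, D (n+1) (n+1) = D (n-1) (n-1) := by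
    intro n
    have key : (w n * v n) * (D (n+1) (n+1) - D (n-1) (n-1)) = 0 := by
      linear_combination (-(w n)) * f3 n + α * (w n - v n) * f4 n + v n * f2 n
    rcases mul_eq_zero.1 key with h | h
    · exact absurd h (mul_ne_zero (hw0 n) (hv0 n))
    · linear_combination h
  by_cases hconst : ∀ n : ℤ, D (n+1) (n+1) = D n n
  · -- diagonal is constant
    have hdn : ∀ n : ℤ, D n n = D 0 0 :=
      fun n => int_invariant (f := fun k => D k k) hconst n 0
    have hCdiagzero : ∀ n : ℤ, C n n = 0 := by
      intro n
      have g2 := f2 n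
      rw [hdn (n-1), hdn n, sub_self, mul_zero] at g2
      exact (mul_eq_zero.1 g2).resolve_left (mul_ne_zero hα (hc n))
    have hC : ∀ m n : ℤ, C m n = 0 := by
      intro m n
      rcases eq_or_ne m n with h|h
      · subst h; exact hCdiagzero m
      · exact hCoff m n h
    have hB : ∀ m n : ℤ, B m n = 0 := by
      intro m n
      have h2 := S3 n m
      rw [hC n m] at h2
      have h3 : conj (B m n) = 0 := h2.symm
      simpa using congrArg conj h3
    refine ⟨D 0 0, ?_, hB, hC, ?_⟩
    · intro m n
      rcases eq_or_ne m n with h|h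
      · subst h; rw [if_pos rfl, f1 m, hdn]
      · rw [if_neg h]; exact hAoff m n h
    · intro m n
      rcases eq_or_ne m n with h|h
      · subst h; rw [if_pos rfl, hdn]
      · rw [if_neg h]; exact hDoff m n h
  · exfalso
    push_neg at hconst
    obtain ⟨n₀, hn₀⟩ := hconst
    have hdel : ∀ n : ℤ, ‖D (n+1) (n+1) - D n n‖ = ‖D (n₀+1) (n₀+1) - D n₀ n₀‖ := by
      intro n
      apply int_invariant (f := fun k => ‖D (k+1) (k+1) - D k k‖)
      intro k
      have e := f5 (k+1)
      simp only [add_sub_cancel_right] at e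
      show ‖D (k+1+1) (k+1+1) - D (k+1) (k+1)‖ = ‖D (k+1) (k+1) - D k k‖
      rw [e, norm_sub_rev]
    have hgn : ∀ n : ℤ, ‖C n n‖ = ‖C 0 0‖ := by
      intro n
      apply int_invariant (f := fun k => ‖C k k‖)
      intro k
      have e := congrArg norm (f4 k)
      rwa [norm_mul, norm_mul, hwn, hvn, one_mul, one_mul] at e
    have hEC : ∀ n : ℤ, ‖α‖ * ‖w n - v n‖ * ‖C (n+1) (n+1)‖ = ‖D (n+1) (n+1) - D n n‖ := by
      intro n
      have e := congrArg norm (f3 n)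
      rwa [norm_mul, norm_mul, norm_mul, hvn, one_mul] at e
    have hδpos : ‖D (n₀+1) (n₀+1) - D n₀ n₀‖ ≠ 0 :=
      norm_ne_zero_iff.2 (sub_ne_zero.2 hn₀)
    have hG : ‖C 0 0‖ ≠ 0 := by
      intro h
      have e := hEC n₀
      rw [hgn (n₀+1), h, mul_zero] at e
      exact hδpos e.symm
    have hcn : ∀ n : ℤ, ‖w n - v n‖ * (‖α‖ * ‖C 0 0‖) = ‖D (n₀+1) (n₀+1) - D n₀ n₀‖ := by
      intro n
      have e := hEC n
      rw [hgn (n+1), hdel n] at e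
      linear_combination e
    have hα0 : ‖α‖ ≠ 0 := norm_ne_zero_iff.2 hα
    have hcc2 : ∀ n : ℤ, ‖w n - v n‖ = ‖w 0 - v 0‖ := by
      intro n
      have e1 := hcn n
      have e2 := hcn 0
      have e3 : ‖w n - v n‖ * (‖α‖ * ‖C 0 0‖) = ‖w 0 - v 0‖ * (‖α‖ * ‖C 0 0‖) := by
        rw [e1, e2]
      exact mul_right_cancel₀ (mul_ne_zero hα0 hG) e3
    have h10 := h1 1 0 (by rw [hcc2 1])
    have h20 := h1 2 0 (by rw [hcc2 2])
    rcases h10 with h|h <;> rcases h20 with h'|h' <;> omega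


/-- Corollary 3.8: irreducibility of `T(wₙ, vₙ, α)` with unimodular weights. -/
theorem irreducibility_of_T_w_v_alpha
    (w v : ℤ → ℂ) (hw : ∀ n, ‖w n‖ = 1) (hv : ∀ n, ‖v n‖ = 1)
    (α : ℂ) (hα : α ≠ 0)
    (T0 T1 X : Hl →L[ℂ] Hl)
    (hT0 : ∀ n : ℤ, T0 (eb n) = w n • eb (n + 1))
    (hT1 : ∀ n : ℤ, T1 (eb n) = v n • eb (n + 1))
    (hX : ∀ n : ℤ, X (eb n) = α • eb n)
    (hXT : X.comp T1 ≠ T0.comp X)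
    (h1 : ∃ i0 : ℤ, ∀ m n : ℤ,
      ‖w n - v n‖ ^ 2 = ‖w m - v m‖ ^ 2 → m = n ∨ m = -(n + i0))
    (hcond : ∀ n : ℤ,
      (¬ ∃ r : ℝ, w n * w (n - 1) * starRingEnd ℂ (w n - v n) *
          starRingEnd ℂ (w (n - 1) - v (n - 1)) = (r : ℂ)) ∨
      (1 - w n * starRingEnd ℂ (v n)) * ((‖w (n - 1) - v (n - 1)‖ ^ 2 : ℝ) : ℂ) ≠
        (1 - starRingEnd ℂ (w (n - 1)) * v (n - 1)) * ((‖w n - v n‖ ^ 2 : ℝ) : ℂ)) :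
    IsIrreducibleOp (blockT T0 T1 X) := by
  intro K hKc hKT hKTa
  obtain ⟨i0, h1⟩ := h1
  haveI : CompleteSpace K := hKc.completeSpace_coe
  -- the weights differ everywhere
  have hcnz : ∀ n : ℤ, w n - v n ≠ 0 := by
    intro n hzero
    have hwv : w n = v n := sub_eq_zero.mp hzero
    have h2 : conj (w n) * w n = 1 := by
      rw [mul_comm, Complex.mul_conj', hw n]; norm_num
    rcases hcond (n+1) with h | h
    · apply h
      refine ⟨0, ?_⟩
      simp only [add_sub_cancel_right]
      rw [hzero]
      simp
    · apply h
      simp only [add_sub_cancel_right]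
      rw [← hwv, sub_self, h2, sub_self, zero_mul]
      simp
  set T : H2 →L[ℂ] H2 := blockT T0 T1 X with hTdef
  set P : H2 →L[ℂ] H2 := K.subtypeL.comp (K.orthogonalProjectionOnto) with hPdef2
  have hPdef : ∀ z : H2, P z = (K.orthogonalProjectionOnto z : H2) := fun z => rfl
  have hPmem : ∀ z : H2, P z ∈ K := fun z => (K.orthogonalProjectionOnto z).2
  have hPid : ∀ z ∈ K, P z = z := by
    intro z hz
    rw [hPdef]
    rw [← Submodule.starProjection_apply]
    exact Submodule.starProjection_eq_self_iff.2 hz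
  have hPsa : ∀ x y : H2, (inner ℂ (P x) y : ℂ) = inner ℂ x (P y) := fun x y =>
    Submodule.inner_starProjection_left_eq_right K x y
  have hPT : ∀ z : H2, P (T z) = T (P z) := by
    intro z
    have hz1 : T (P z) ∈ K := hKT _ (hPmem z)
    have hz2 : T (z - P z) ∈ Kᗮ := by
      rw [Submodule.mem_orthogonal']
      intro u hu
      rw [← ContinuousLinearMap.adjoint_inner_right]
      have hzperp : z - P z ∈ Kᗮ := Submodule.sub_starProjection_mem_orthogonal z
      exact (Submodule.mem_orthogonal' K _).1 hzperp _ (hKTa u hu)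
    have e1 : T z = T (P z) + T (z - P z) := by
      rw [← map_add]
      congr 1
      abel
    rw [e1, map_add, hPid _ hz1]
    have e2 : P (T (z - P z)) = 0 := by
      rw [hPdef, Submodule.orthogonalProjectionOnto_apply_of_mem_orthogonal hz2]
      simp
    rw [e2, add_zero]
  -- coordinates of T z
  have hcoord0 : ∀ (m : ℤ) (z : H2), (inner ℂ (E0 m) (T z) : ℂ)
      = w (m-1) * z.fst (m-1) + α * (v (m-1) - w (m-1)) * z.snd (m-1) := by
    intro m z
    rw [inner_E0_left, hTdef, blockT_fst]
    have e : (T0 z.fst + (X (T1 z.snd) - T0 (X z.snd))) m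
        = (T0 z.fst) m + ((X (T1 z.snd)) m - (T0 (X z.snd)) m) := by
      simp [lp.coeFn_add, lp.coeFn_sub]
    rw [e, coord_shift w T0 hT0, coord_diag α X hX, coord_shift v T1 hT1,
      coord_shift w T0 hT0, coord_diag α X hX]
    ring
  have hcoord1 : ∀ (m : ℤ) (z : H2), (inner ℂ (E1 m) (T z) : ℂ) = v (m-1) * z.snd (m-1) := by
    intro m z
    rw [inner_E1_left, hTdef, blockT_snd, coord_shift v T1 hT1]
  -- action of T on the basis
  have hTE0 : ∀ n : ℤ, T (E0 n) = w n • E0 (n+1) := by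
    intro n
    apply H2_ext
    · intro k
      rw [hcoord0, inner_smul_right, inner_E0_left]
      show w (k-1) * (eb n) (k-1) + α * (v (k-1) - w (k-1)) * ((0:Hl)) (k-1)
        = w n * (eb (n+1)) k
      rcases eq_or_ne k (n+1) with h | h
      · subst h
        simp only [add_sub_cancel_right, eb_apply]
        simp
      · rw [eb_apply, eb_apply, if_neg (by omega), if_neg h]
        simp
    · intro k
      rw [hcoord1, inner_smul_right, inner_E1_left]
      show v (k-1) * ((0:Hl)) (k-1) = w n * ((0:Hl)) k
      simp
  have hTE1 : ∀ n : ℤ, T (E1 n) = (α * (v n - w n)) • E0 (n+1) + v n • E1 (n+1) := by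
    intro n
    apply H2_ext
    · intro k
      rw [hcoord0, inner_add_right, inner_smul_right, inner_smul_right,
        inner_E0_left, inner_E0_left]
      show w (k-1) * ((0:Hl)) (k-1) + α * (v (k-1) - w (k-1)) * (eb n) (k-1)
        = α * (v n - w n) * (eb (n+1)) k + v n * ((0:Hl)) k
      rcases eq_or_ne k (n+1) with h | h
      · subst h
        simp only [add_sub_cancel_right, eb_apply]
        simp
      · rw [eb_apply, eb_apply, if_neg (by omega), if_neg h]
        simp
    · intro k
      rw [hcoord1, inner_add_right, inner_smul_right, inner_smul_right,
        inner_E1_left, inner_E1_left]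
      show v (k-1) * (eb n) (k-1) = α * (v n - w n) * ((0:Hl)) k + v n * (eb (n+1)) k
      rcases eq_or_ne k (n+1) with h | h
      · subst h
        simp only [add_sub_cancel_right, eb_apply]
        simp
      · rw [eb_apply, eb_apply, if_neg (by omega), if_neg h]
        simp
  -- entry relations
  have S1 : ∀ m n : ℤ, (inner ℂ (E0 m) (P (E0 n)) : ℂ) = conj (inner ℂ (E0 n) (P (E0 m))) := by
    intro m n
    rw [inner_conj_symm, hPsa]
  have S2 : ∀ m n : ℤ, (inner ℂ (E1 m) (P (E1 n)) : ℂ) = conj (inner ℂ (E1 n) (P (E1 m))) := by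
    intro m n
    rw [inner_conj_symm, hPsa]
  have S3 : ∀ m n : ℤ, (inner ℂ (E1 m) (P (E0 n)) : ℂ) = conj (inner ℂ (E0 n) (P (E1 m))) := by
    intro m n
    rw [inner_conj_symm, hPsa]
  have cP00 : ∀ (k n : ℤ), ((P (E0 n)).fst k : ℂ) = inner ℂ (E0 k) (P (E0 n)) :=
    fun k n => (inner_E0_left _ _).symm
  have cP01 : ∀ (k n : ℤ), ((P (E0 n)).snd k : ℂ) = inner ℂ (E1 k) (P (E0 n)) :=
    fun k n => (inner_E1_left _ _).symm
  have cP10 : ∀ (k n : ℤ), ((P (E1 n)).fst k : ℂ) = inner ℂ (E0 k) (P (E1 n)) :=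
    fun k n => (inner_E0_left _ _).symm
  have cP11 : ∀ (k n : ℤ), ((P (E1 n)).snd k : ℂ) = inner ℂ (E1 k) (P (E1 n)) :=
    fun k n => (inner_E1_left _ _).symm
  have R1 : ∀ m n : ℤ, w n * (inner ℂ (E0 m) (P (E0 (n+1))) : ℂ)
      = w (m-1) * inner ℂ (E0 (m-1)) (P (E0 n))
        - α * (w (m-1) - v (m-1)) * inner ℂ (E1 (m-1)) (P (E0 n)) := by
    intro m n
    have h := congrArg (fun z : H2 => (inner ℂ (E0 m) z : ℂ)) (hPT (E0 n))
    rw [hTE0 n, map_smul, inner_smul_right, hcoord0, cP00, cP01] at h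
    linear_combination h
  have R3 : ∀ m n : ℤ, w n * (inner ℂ (E1 m) (P (E0 (n+1))) : ℂ)
      = v (m-1) * inner ℂ (E1 (m-1)) (P (E0 n)) := by
    intro m n
    have h := congrArg (fun z : H2 => (inner ℂ (E1 m) z : ℂ)) (hPT (E0 n))
    rw [hTE0 n, map_smul, inner_smul_right, hcoord1, cP01] at h
    linear_combination h
  have R2 : ∀ m n : ℤ, -(α * (w n - v n)) * (inner ℂ (E0 m) (P (E0 (n+1))) : ℂ)
      + v n * inner ℂ (E0 m) (P (E1 (n+1)))
      = w (m-1) * inner ℂ (E0 (m-1)) (P (E1 n))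
        - α * (w (m-1) - v (m-1)) * inner ℂ (E1 (m-1)) (P (E1 n)) := by
    intro m n
    have h := congrArg (fun z : H2 => (inner ℂ (E0 m) z : ℂ)) (hPT (E1 n))
    rw [hTE1 n, map_add, map_smul, map_smul, inner_add_right, inner_smul_right,
      inner_smul_right, hcoord0, cP10, cP11] at h
    linear_combination h
  have R4 : ∀ m n : ℤ, -(α * (w n - v n)) * (inner ℂ (E1 m) (P (E0 (n+1))) : ℂ)
      + v n * inner ℂ (E1 m) (P (E1 (n+1)))
      = v (m-1) * inner ℂ (E1 (m-1)) (P (E1 n)) := by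
    intro m n
    have h := congrArg (fun z : H2 => (inner ℂ (E1 m) z : ℂ)) (hPT (E1 n))
    rw [hTE1 n, map_add, map_smul, map_smul, inner_add_right, inner_smul_right,
      inner_smul_right, hcoord1, cP11] at h
    linear_combination h
  -- apply the main algebraic lemma
  obtain ⟨lam, hA, hB, hC, hD⟩ := key_alg w v hw hv α hα hcnz i0 h1
    (fun m n => (inner ℂ (E0 m) (P (E0 n)) : ℂ))
    (fun m n => (inner ℂ (E0 m) (P (E1 n)) : ℂ))
    (fun m n => (inner ℂ (E1 m) (P (E0 n)) : ℂ))
    (fun m n => (inner ℂ (E1 m) (P (E1 n)) : ℂ))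
    S1 S2 S3 R1 R2 R3 R4
  replace hA : ∀ m n : ℤ, (inner ℂ (E0 m) (P (E0 n)) : ℂ) = if m = n then lam else 0 := hA
  replace hB : ∀ m n : ℤ, (inner ℂ (E0 m) (P (E1 n)) : ℂ) = 0 := hB
  replace hC : ∀ m n : ℤ, (inner ℂ (E1 m) (P (E0 n)) : ℂ) = 0 := hC
  replace hD : ∀ m n : ℤ, (inner ℂ (E1 m) (P (E1 n)) : ℂ) = if m = n then lam else 0 := hD
  -- P acts as lam • id on the basis
  have hPE0 : ∀ n : ℤ, P (E0 n) = lam • E0 n := by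
    intro n
    apply H2_ext
    · intro k
      rw [hA k n, inner_smul_right, inner_E0_left]
      show (if k = n then lam else 0) = lam * (eb n) k
      rw [eb_apply]
      split_ifs <;> simp
    · intro k
      rw [hC k n, inner_smul_right, inner_E1_left]
      show (0:ℂ) = lam * ((0:Hl)) k
      simp
  have hPE1 : ∀ n : ℤ, P (E1 n) = lam • E1 n := by
    intro n
    apply H2_ext
    · intro k
      rw [hB k n, inner_smul_right, inner_E0_left]
      show (0:ℂ) = lam * ((0:Hl)) k
      simp
    · intro k
      rw [hD k n, inner_smul_right, inner_E1_left]
      show (if k = n then lam else 0) = lam * (eb n) k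
      rw [eb_apply]
      split_ifs <;> simp
  -- lam is idempotent
  have hone : (inner ℂ (E0 0) (E0 0) : ℂ) = 1 := by
    rw [inner_E0_left]
    show (eb 0) (0:ℤ) = 1
    rw [eb_apply]
    simp
  have hE0ne : (E0 0 : H2) ≠ 0 := by
    intro h0
    rw [h0, inner_zero_right] at hone
    exact zero_ne_one hone
  have hlam2 : lam * lam = lam := by
    have h := hPid (P (E0 0)) (hPmem (E0 0))
    rw [hPE0 0, map_smul, hPE0 0, smul_smul] at h
    have h2 : (lam * lam - lam) • (E0 0 : H2) = 0 := by
      rw [sub_smul, h, sub_self]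
    rcases smul_eq_zero.1 h2 with h3 | h3
    · linear_combination h3
    · exact absurd h3 hE0ne
  have hlam01 : lam = 0 ∨ lam = 1 := by
    have h4 : lam * (lam - 1) = 0 := by linear_combination hlam2
    rcases mul_eq_zero.1 h4 with h | h
    · exact Or.inl h
    · exact Or.inr (by linear_combination h)
  rcases hlam01 with hl | hl
  · left
    rw [Submodule.eq_bot_iff]
    intro x hx
    rw [← hPid x hx]
    apply H2_ext
    · intro k
      rw [← hPsa, hPE0 k, hl, zero_smul, inner_zero_left, inner_zero_right]
    · intro k
      rw [← hPsa, hPE1 k, hl, zero_smul, inner_zero_left, inner_zero_right]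
  · right
    rw [Submodule.eq_top_iff']
    intro x
    have hPx : P x = x := by
      apply H2_ext
      · intro k
        rw [← hPsa, hPE0 k, hl, one_smul]
      · intro k
        rw [← hPsa, hPE1 k, hl, one_smul]
    rw [← hPx]
    exact hPmem x
end
end

section
/- Let (t_n)_{n∈ℤ} be a sequence of nonzero complex numbers with (t_n) and (1/t_n) bounded, let (d_n)_{n∈ℤ} be a bounded sequence of complex numbers with XT₁ ≠ T₀X, and let T = T(t_n, d_n) be the associated bounded block-shift operator on H ⊕ H. If both bilateral weighted shifts T₀ (with weights t_n) and T₁ (with weights 1/t_n) are irreducible and for every i ∈ ℤ one has lim_{k→∞} ∏_{m=0}^{k} |t_{i+m}| = 0, then T is irreducible. -/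
noncomputable section

open Complex Metric

/-! ### Auxiliary machinery -/

open Filter ContinuousLinearMap
open scoped ComplexInnerProductSpace

section Aux

lemma inner_eb (n : ℤ) (f : Hl) : ⟪eb n, f⟫ = f n := by
  simp [eb, lp.inner_single_left]

lemma norm_eb (n : ℤ) : ‖eb n‖ = 1 := by
  have h : (⟪eb n, eb n⟫ : ℂ) = 1 := by
    rw [inner_eb]; simp [eb, lp.single_apply_self]
  have h2 := inner_self_eq_norm_sq_to_K (𝕜 := ℂ) (eb n)
  rw [h] at h2
  norm_cast at h2
  have h3 : ‖eb n‖^2 = 1 := Complex.ofReal_eq_one.mp h2.symm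
  nlinarith [norm_nonneg (eb n)]

lemma clm_ext_eb {F : Type*} [NormedAddCommGroup F] [NormedSpace ℂ F]
    {A B : Hl →L[ℂ] F} (h : ∀ n, A (eb n) = B (eb n)) : A = B := by
  ext f
  have hf := lp.hasSum_single (E := fun _ : ℤ => ℂ) ENNReal.ofNat_ne_top f
  have hsmul : ∀ i : ℤ, lp.single 2 i (f i) = f i • eb i := by
    intro i; rw [eb, ← lp.single_smul]; norm_num
  have hA : HasSum (fun i => f i • A (eb i)) (A f) := by
    have := A.hasSum hf; simpa [hsmul] using this
  have hB : HasSum (fun i => f i • A (eb i)) (B f) := by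
    have := B.hasSum hf
    simp only [hsmul, map_smul, h] at this ⊢
    exact this
  exact hA.unique hB

-- powers of a weighted shift on basis vectors
lemma shift_pow (c : ℤ → ℂ) (T : Hl →L[ℂ] Hl) (hT : ∀ n, T (eb n) = c n • eb (n + 1))
    (k : ℕ) (n : ℤ) :
    (T ^ k) (eb n) = (∏ j ∈ Finset.range k, c (n + j)) • eb (n + k) := by
  induction k generalizing n with
  | zero => simp
  | succ k ih =>
    have h1 : (T ^ (k + 1)) (eb n) = (T ^ k) (T (eb n)) := by
      rw [pow_succ, ContinuousLinearMap.mul_apply]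
    rw [h1, hT, map_smul, ih (n + 1), smul_smul, Finset.prod_range_succ']
    have e1 : c (n + ((0:ℕ):ℤ)) = c n := by norm_num
    have e2 : ∀ j ∈ Finset.range k, c (n + ((j+1:ℕ):ℤ)) = c (n + 1 + (j:ℤ)) := by
      intro j _; congr 1; push_cast; ring
    rw [Finset.prod_congr rfl e2, e1, mul_comm]
    congr 2
    push_cast; ring

-- inner product with shifted basis vector through T
lemma inner_shift (c : ℤ → ℂ) (T : Hl →L[ℂ] Hl) (hT : ∀ n, T (eb n) = c n • eb (n + 1))
    (m : ℤ) (y : Hl) : ⟪eb (m + 1), T y⟫ = c m * ⟪eb m, y⟫ := by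
  have : (innerSL ℂ (eb (m + 1))).comp T = c m • (innerSL ℂ (eb m)) := by
    apply clm_ext_eb
    intro j
    simp only [ContinuousLinearMap.comp_apply, ContinuousLinearMap.smul_apply, innerSL_apply_apply, hT]
    rw [inner_smul_right, inner_eb, inner_eb]
    by_cases h : m = j
    · subst h
      simp [eb, lp.single_apply_self, smul_eq_mul]
    · have h1 : (eb (j+1) : ∀ _ : ℤ, ℂ) (m+1) = 0 := lp.single_apply_ne _ _ _ (by omega)
      have h2 : (eb j : ∀ _ : ℤ, ℂ) m = 0 := lp.single_apply_ne _ _ _ (by omega)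
      rw [h1, h2]; simp
  have := congrFun (congrArg (fun (A : Hl →L[ℂ] ℂ) => (A : Hl → ℂ)) this) y
  simpa using this

lemma inner_shift_pow (c : ℤ → ℂ) (T : Hl →L[ℂ] Hl) (hT : ∀ n, T (eb n) = c n • eb (n + 1))
    (k : ℕ) (m : ℤ) (y : Hl) :
    ⟪eb (m + k), (T ^ k) y⟫ = (∏ j ∈ Finset.range k, c (m + j)) * ⟪eb m, y⟫ := by
  induction k generalizing m y with
  | zero => simp
  | succ k ih =>
    have h1 : (T ^ (k + 1)) y = (T ^ k) (T y) := by
      rw [pow_succ, ContinuousLinearMap.mul_apply]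
    have hme : (m + ((k:ℤ) + 1)) = (m + 1) + k := by ring
    rw [h1]
    rw [Nat.cast_add, Nat.cast_one]
    rw [hme, ih (m + 1) (T y), inner_shift c T hT m y]
    rw [Finset.prod_range_succ']
    have : ∀ j ∈ Finset.range k, c (m + 1 + j) = c (m + (j + 1 : ℕ)) := by
      intro j _; congr 1; push_cast; ring
    rw [Finset.prod_congr rfl this]
    norm_num [mul_assoc]

lemma intertwine_zero (t : ℤ → ℂ) (ht0 : ∀ n, t n ≠ 0)
    (T0 T1 : Hl →L[ℂ] Hl)
    (hT0 : ∀ n, T0 (eb n) = t n • eb (n + 1))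
    (hT1 : ∀ n, T1 (eb n) = (t n)⁻¹ • eb (n + 1))
    (hlim : ∀ i : ℤ, Tendsto (fun k : ℕ => ∏ m ∈ Finset.range k, ‖t (i + (m : ℤ))‖) atTop (nhds 0))
    (S : Hl →L[ℂ] Hl) (hS : ∀ x, S (T0 x) = T1 (S x)) : S = 0 := by
  have hSk : ∀ (k : ℕ) (x : Hl), S ((T0 ^ k) x) = (T1 ^ k) (S x) := by
    intro k
    induction k with
    | zero => intro x; simp
    | succ k ih =>
      intro x
      rw [pow_succ, ContinuousLinearMap.mul_apply, pow_succ, ContinuousLinearMap.mul_apply,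
        ih (T0 x), hS]
  apply clm_ext_eb
  intro n
  simp only [ContinuousLinearMap.zero_apply]
  set y := S (eb n) with hy
  have coord : ∀ m : ℤ, ⟪eb m, y⟫ = 0 := by
    intro m
    have key : ∀ k : ℕ, ‖(⟪eb m, y⟫ : ℂ)‖ ≤
        (∏ j ∈ Finset.range k, ‖t (m + (j:ℤ))‖) * (‖S‖ * ∏ j ∈ Finset.range k, ‖t (n + (j:ℤ))‖) := by
      intro k
      have h1 : ⟪eb (m + (k:ℤ)), (T1 ^ k) y⟫ =
          (∏ j ∈ Finset.range k, (t (m + (j:ℤ)))⁻¹) * ⟪eb m, y⟫ :=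
        inner_shift_pow _ T1 hT1 k m y
      have h2 : ‖(⟪eb (m + (k:ℤ)), (T1 ^ k) y⟫ : ℂ)‖ ≤ ‖(T1 ^ k) y‖ := by
        calc ‖(⟪eb (m + (k:ℤ)), (T1 ^ k) y⟫ : ℂ)‖
            ≤ ‖eb (m + (k:ℤ))‖ * ‖(T1 ^ k) y‖ := norm_inner_le_norm _ _
          _ = ‖(T1 ^ k) y‖ := by rw [norm_eb, one_mul]
      have h3 : (T1 ^ k) y = S ((T0 ^ k) (eb n)) := (hSk k (eb n)).symm
      have h4 : ‖S ((T0 ^ k) (eb n))‖ ≤ ‖S‖ * ∏ j ∈ Finset.range k, ‖t (n + (j:ℤ))‖ := by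
        rw [shift_pow t T0 hT0 k n]
        calc ‖S ((∏ j ∈ Finset.range k, t (n + (j:ℤ))) • eb (n + (k:ℤ)))‖
            ≤ ‖S‖ * ‖(∏ j ∈ Finset.range k, t (n + (j:ℤ))) • eb (n + (k:ℤ))‖ := S.le_opNorm _
          _ = ‖S‖ * ∏ j ∈ Finset.range k, ‖t (n + (j:ℤ))‖ := by
              rw [norm_smul, norm_eb, mul_one, norm_prod]
      have hprodpos : (0:ℝ) < ∏ j ∈ Finset.range k, ‖t (m + (j:ℤ))‖ :=
        Finset.prod_pos (fun j _ => norm_pos_iff.mpr (ht0 _))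
      have h5 : ‖(⟪eb m, y⟫ : ℂ)‖ =
          (∏ j ∈ Finset.range k, ‖t (m + (j:ℤ))‖) * ‖(⟪eb (m + (k:ℤ)), (T1 ^ k) y⟫ : ℂ)‖ := by
        rw [h1, norm_mul, norm_prod]
        have : ∏ j ∈ Finset.range k, ‖(t (m + (j:ℤ)))⁻¹‖ =
            (∏ j ∈ Finset.range k, ‖t (m + (j:ℤ))‖)⁻¹ := by
          rw [← Finset.prod_inv_distrib]
          exact Finset.prod_congr rfl (fun j _ => norm_inv _)
        rw [this, ← mul_assoc, mul_inv_cancel₀ hprodpos.ne', one_mul]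
      rw [h5]
      refine mul_le_mul_of_nonneg_left ?_ hprodpos.le
      rw [h3]
      rw [h3] at h2
      exact h2.trans h4
    have hb : Tendsto (fun k : ℕ => (∏ j ∈ Finset.range k, ‖t (m + (j:ℤ))‖) *
        (‖S‖ * ∏ j ∈ Finset.range k, ‖t (n + (j:ℤ))‖)) atTop (nhds 0) := by
      have h := (hlim m).mul ((hlim n).const_mul ‖S‖)
      have h0 : (0:ℝ) * (‖S‖ * 0) = 0 := by ring
      rwa [h0] at h
    have hle : ‖(⟪eb m, y⟫ : ℂ)‖ ≤ 0 := ge_of_tendsto' hb key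
    have := norm_le_zero_iff.mp hle
    exact this
  apply lp.ext
  funext m
  have := coord m
  rw [inner_eb] at this
  simpa using this

/-- Triviality of self-adjoint idempotents commuting with an irreducible operator. -/
lemma proj_trivial (A Q : Hl →L[ℂ] Hl) (hIrr : IsIrreducibleOp A)
    (hsym : ∀ x y : Hl, ⟪Q x, y⟫ = ⟪x, Q y⟫)
    (hidem : ∀ x, Q (Q x) = Q x)
    (hcomm : ∀ x, Q (A x) = A (Q x)) :
    (∀ x, Q x = 0) ∨ (∀ x, Q x = x) := by
  have hQsa : IsSelfAdjoint Q :=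
    LinearMap.IsSymmetric.isSelfAdjoint (fun x y => hsym x y)
  have hcomm' : ∀ x, Q ((ContinuousLinearMap.adjoint A) x)
      = (ContinuousLinearMap.adjoint A) (Q x) := by
    have hc : Q ∘L A = A ∘L Q := ContinuousLinearMap.ext fun x => hcomm x
    have h2 := congrArg ContinuousLinearMap.adjoint hc
    rw [ContinuousLinearMap.adjoint_comp, ContinuousLinearMap.adjoint_comp,
      hQsa.adjoint_eq] at h2
    intro x
    exact (congrFun (congrArg DFunLike.coe h2) x).symm
  set K0 : Submodule ℂ Hl := LinearMap.ker (ContinuousLinearMap.id ℂ Hl - Q).toLinearMap with hK0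
  have hmem : ∀ x, x ∈ K0 ↔ Q x = x := by
    intro x
    rw [hK0, LinearMap.mem_ker]
    constructor
    · intro h
      have : x - Q x = 0 := h
      have := sub_eq_zero.mp this
      exact this.symm
    · intro h
      show x - Q x = 0
      rw [h, sub_self]
  have hclosed : IsClosed (K0 : Set Hl) := ContinuousLinearMap.isClosed_ker _
  have hinv : ∀ x ∈ K0, A x ∈ K0 := by
    intro x hx
    rw [hmem] at hx ⊢
    rw [hcomm, hx]
  have hinv' : ∀ x ∈ K0, (ContinuousLinearMap.adjoint A) x ∈ K0 := by
    intro x hx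
    rw [hmem] at hx ⊢
    rw [hcomm', hx]
  rcases hIrr K0 hclosed hinv hinv' with h | h
  · left
    intro x
    have hx : Q x ∈ K0 := (hmem _).mpr (hidem x)
    rw [h] at hx
    simpa using hx
  · right
    intro x
    have hx : x ∈ K0 := h ▸ Submodule.mem_top
    exact (hmem x).mp hx

/-! ### Block decomposition of `H ⊕ H` -/

/-- First coordinate projection. -/
def pi1 : H2 →L[ℂ] Hl :=
  (ContinuousLinearMap.fst ℂ Hl Hl).comp
    (WithLp.prodContinuousLinearEquiv 2 ℂ Hl Hl).toContinuousLinearMap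

/-- Second coordinate projection. -/
def pi2 : H2 →L[ℂ] Hl :=
  (ContinuousLinearMap.snd ℂ Hl Hl).comp
    (WithLp.prodContinuousLinearEquiv 2 ℂ Hl Hl).toContinuousLinearMap

/-- First coordinate inclusion. -/
def io1 : Hl →L[ℂ] H2 :=
  ((WithLp.prodContinuousLinearEquiv 2 ℂ Hl Hl).symm.toContinuousLinearMap).comp
    (ContinuousLinearMap.inl ℂ Hl Hl)

/-- Second coordinate inclusion. -/
def io2 : Hl →L[ℂ] H2 :=
  ((WithLp.prodContinuousLinearEquiv 2 ℂ Hl Hl).symm.toContinuousLinearMap).comp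
    (ContinuousLinearMap.inr ℂ Hl Hl)

lemma pi1_io1 (x : Hl) : pi1 (io1 x) = x := rfl
lemma pi2_io1 (x : Hl) : pi2 (io1 x) = 0 := rfl
lemma pi1_io2 (x : Hl) : pi1 (io2 x) = 0 := rfl
lemma pi2_io2 (x : Hl) : pi2 (io2 x) = x := rfl

lemma h2_ext {z w : H2} (h1 : pi1 z = pi1 w) (h2 : pi2 z = pi2 w) : z = w := by
  apply (WithLp.prodContinuousLinearEquiv 2 ℂ Hl Hl).injective
  exact Prod.ext h1 h2

lemma h2_decomp (z : H2) : z = io1 (pi1 z) + io2 (pi2 z) := by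
  apply (WithLp.prodContinuousLinearEquiv 2 ℂ Hl Hl).injective
  apply Prod.ext <;> simp [io1, io2, pi1, pi2]

lemma inner_io1_left (x : Hl) (z : H2) : ⟪io1 x, z⟫ = ⟪x, pi1 z⟫ := by
  simp [io1, pi1, WithLp.prod_inner_apply]

lemma inner_io1_right (z : H2) (x : Hl) : ⟪z, io1 x⟫ = ⟪pi1 z, x⟫ := by
  simp [io1, pi1, WithLp.prod_inner_apply]

lemma inner_io2_left (x : Hl) (z : H2) : ⟪io2 x, z⟫ = ⟪x, pi2 z⟫ := by
  simp [io2, pi2, WithLp.prod_inner_apply]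

lemma inner_io2_right (z : H2) (x : Hl) : ⟪z, io2 x⟫ = ⟪pi2 z, x⟫ := by
  simp [io2, pi2, WithLp.prod_inner_apply]

lemma pi1_blockT (T0 T1 X : Hl →L[ℂ] Hl) (z : H2) :
    pi1 (blockT T0 T1 X z) = T0 (pi1 z) + (X (T1 (pi2 z)) - T0 (X (pi2 z))) := rfl

lemma pi2_blockT (T0 T1 X : Hl →L[ℂ] Hl) (z : H2) :
    pi2 (blockT T0 T1 X z) = T1 (pi2 z) := rfl

lemma blockT_io1 (T0 T1 X : Hl →L[ℂ] Hl) (x : Hl) :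
    blockT T0 T1 X (io1 x) = io1 (T0 x) := by
  apply h2_ext
  · rw [pi1_blockT, pi1_io1, pi1_io1, pi2_io1]
    simp
  · rw [pi2_blockT, pi2_io1, pi2_io1]
    simp

lemma blockT_io2 (T0 T1 X : Hl →L[ℂ] Hl) (y : Hl) :
    blockT T0 T1 X (io2 y) = io1 (X (T1 y) - T0 (X y)) + io2 (T1 y) := by
  apply h2_ext
  · rw [pi1_blockT, pi1_io2, pi2_io2]
    simp only [map_add, pi1_io1, pi1_io2, map_zero, zero_add, add_zero]
  · rw [pi2_blockT, pi2_io2]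
    simp only [map_add, pi2_io1, pi2_io2, map_zero, zero_add]

end Aux

open Filter in
/-- Corollary 3.10: if `T₀` and `T₁` are irreducible and
`lim_{k→∞} ∏_{m=0}^{k} |t_{i+m}| = 0` for every `i`, then `T(tₙ, dₙ)` is irreducible. -/
theorem irreducibility_of_T_t_d_of_prod_tendsto_zero
    (t : ℤ → ℂ) (ht0 : ∀ n, t n ≠ 0)
    (htb : ∃ C : ℝ, ∀ n, ‖t n‖ ≤ C) (htb' : ∃ C : ℝ, ∀ n, ‖(t n)⁻¹‖ ≤ C)
    (d : ℤ → ℂ) (hdb : ∃ C : ℝ, ∀ n, ‖d n‖ ≤ C)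
    (T0 T1 X : Hl →L[ℂ] Hl)
    (hT0 : ∀ n : ℤ, T0 (eb n) = t n • eb (n + 1))
    (hT1 : ∀ n : ℤ, T1 (eb n) = (t n)⁻¹ • eb (n + 1))
    (hX : ∀ n : ℤ, X (eb n) = d n • eb n)
    (hXT : X.comp T1 ≠ T0.comp X)
    (hIrr0 : IsIrreducibleOp T0) (hIrr1 : IsIrreducibleOp T1)
    (hlim : ∀ i : ℤ, Tendsto
      (fun k : ℕ => ∏ m ∈ Finset.range (k + 1), ‖t (i + (m : ℤ))‖)
      atTop (nhds 0)) :
    IsIrreducibleOp (blockT T0 T1 X) := by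
  -- the limit hypothesis, re-indexed
  have hlim' : ∀ i : ℤ, Tendsto
      (fun k : ℕ => ∏ m ∈ Finset.range k, ‖t (i + (m : ℤ))‖) atTop (nhds 0) := by
    intro i
    have h := hlim i
    rw [← tendsto_add_atTop_iff_nat 1]
    exact h
  intro K hKc hKT hKTadj
  haveI : CompleteSpace K := hKc.completeSpace_coe
  set T : H2 →L[ℂ] H2 := blockT T0 T1 X with hTdef
  set P : H2 →L[ℂ] H2 := K.subtypeL ∘L K.orthogonalProjectionOnto with hPdef
  have hPmem : ∀ z, P z ∈ K := fun z => (K.orthogonalProjectionOnto z).2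
  have hPid : ∀ z ∈ K, P z = z := by
    intro z hz
    exact Submodule.starProjection_eq_self_iff.mpr hz
  have hPsym : ∀ x y : H2, ⟪P x, y⟫ = ⟪x, P y⟫ := fun x y =>
    (ContinuousLinearMap.isSelfAdjoint_iff_isSymmetric.mp
      (isSelfAdjoint_starProjection K)) x y
  have hPzero : ∀ z ∈ Kᗮ, P z = 0 := by
    intro z hz
    simp [hPdef, Submodule.orthogonalProjectionOnto_apply_of_mem_orthogonal hz]
  have hTorth : ∀ u ∈ Kᗮ, T u ∈ Kᗮ := by
    intro u hu
    rw [Submodule.mem_orthogonal] at hu ⊢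
    intro w hw
    rw [← ContinuousLinearMap.adjoint_inner_left]
    exact hu _ (hKTadj w hw)
  have hPT : ∀ z, P (T z) = T (P z) := by
    intro z
    have hdz : z - P z ∈ Kᗮ := K.sub_starProjection_mem_orthogonal z
    have h1 : P (T (P z)) = T (P z) := hPid _ (hKT _ (hPmem z))
    have h2 : P (T (z - P z)) = 0 := hPzero _ (hTorth _ hdz)
    have h3 : T z = T (P z) + T (z - P z) := by
      rw [← map_add]
      congr 1
      abel
    rw [h3, map_add, h1, h2, add_zero]
  -- block entries of P
  set Q1 : Hl →L[ℂ] Hl := pi1 ∘L P ∘L io1 with hQ1def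
  set Q2 : Hl →L[ℂ] Hl := pi2 ∘L P ∘L io2 with hQ2def
  set S21 : Hl →L[ℂ] Hl := pi2 ∘L P ∘L io1 with hS21def
  set S12 : Hl →L[ℂ] Hl := pi1 ∘L P ∘L io2 with hS12def
  -- the (2,1) entry intertwines T0 and T1, hence vanishes
  have hS21c : ∀ x, S21 (T0 x) = T1 (S21 x) := by
    intro x
    have h1 : S21 (T0 x) = pi2 (P (T (io1 x))) := by
      rw [hS21def]
      simp only [ContinuousLinearMap.comp_apply]
      rw [hTdef, blockT_io1]
    rw [h1, hPT, hTdef, pi2_blockT]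
    rfl
  have hS21z : S21 = 0 := intertwine_zero t ht0 T0 T1 hT0 hT1 hlim' S21 hS21c
  -- the (1,2) entry vanishes by self-adjointness
  have hS12z : ∀ y, S12 y = 0 := by
    intro y
    apply ext_inner_left ℂ
    intro v
    have h1 : ⟪v, S12 y⟫ = ⟪io1 v, P (io2 y)⟫ := by
      rw [inner_io1_left]
      rfl
    rw [h1, ← hPsym, inner_io2_right]
    have h2 : pi2 (P (io1 v)) = S21 v := rfl
    rw [h2, hS21z]
    simp
  -- P maps the two summands into themselves
  have hPio1 : ∀ x, P (io1 x) = io1 (Q1 x) := by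
    intro x
    apply h2_ext
    · rw [pi1_io1]; rfl
    · rw [pi2_io1]
      have : pi2 (P (io1 x)) = S21 x := rfl
      rw [this, hS21z]
      rfl
  have hPio2 : ∀ y, P (io2 y) = io2 (Q2 y) := by
    intro y
    apply h2_ext
    · rw [pi1_io2]
      exact hS12z y
    · rw [pi2_io2]; rfl
  -- Q1 commutes with T0
  have hQ1c : ∀ x, Q1 (T0 x) = T0 (Q1 x) := by
    intro x
    have h1 : Q1 (T0 x) = pi1 (P (T (io1 x))) := by
      rw [hQ1def]
      simp only [ContinuousLinearMap.comp_apply]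
      rw [hTdef, blockT_io1]
    rw [h1, hPT, hPio1, hTdef, blockT_io1, pi1_io1]
  -- Q2 commutes with T1
  have hQ2c : ∀ y, Q2 (T1 y) = T1 (Q2 y) := by
    intro y
    have h1 : io2 (T1 y) = T (io2 y) - io1 (X (T1 y) - T0 (X y)) := by
      rw [hTdef, blockT_io2]
      abel
    have h2 : Q2 (T1 y) = pi2 (P (io2 (T1 y))) := rfl
    rw [h2, h1, map_sub, hPT, hPio1, hPio2, hTdef, blockT_io2, map_sub, map_add,
      pi2_io1, pi2_io2, pi2_io1]
    simp
  -- symmetry of Q1 and Q2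
  have hQ1s : ∀ x y : Hl, ⟪Q1 x, y⟫ = ⟪x, Q1 y⟫ := by
    intro x y
    have h1 : ⟪Q1 x, y⟫ = ⟪P (io1 x), io1 y⟫ := by
      rw [inner_io1_right]; rfl
    have h2 : ⟪x, Q1 y⟫ = ⟪io1 x, P (io1 y)⟫ := by
      rw [inner_io1_left]; rfl
    rw [h1, h2, hPsym]
  have hQ2s : ∀ x y : Hl, ⟪Q2 x, y⟫ = ⟪x, Q2 y⟫ := by
    intro x y
    have h1 : ⟪Q2 x, y⟫ = ⟪P (io2 x), io2 y⟫ := by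
      rw [inner_io2_right]; rfl
    have h2 : ⟪x, Q2 y⟫ = ⟪io2 x, P (io2 y)⟫ := by
      rw [inner_io2_left]; rfl
    rw [h1, h2, hPsym]
  -- idempotency
  have hPP : ∀ z, P (P z) = P z := fun z => hPid _ (hPmem z)
  have hQ1i : ∀ x, Q1 (Q1 x) = Q1 x := by
    intro x
    have h1 : Q1 (Q1 x) = pi1 (P (io1 (Q1 x))) := rfl
    rw [h1, ← hPio1, hPP]
    rfl
  have hQ2i : ∀ y, Q2 (Q2 y) = Q2 y := by
    intro y
    have h1 : Q2 (Q2 y) = pi2 (P (io2 (Q2 y))) := rfl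
    rw [h1, ← hPio2, hPP]
    rfl
  -- the intertwining relation between Q1 and Q2 through the corner operator
  have hQ12 : ∀ y, Q1 (X (T1 y) - T0 (X y)) = X (T1 (Q2 y)) - T0 (X (Q2 y)) := by
    intro y
    have h1 : pi1 (P (T (io2 y))) = Q1 (X (T1 y) - T0 (X y)) := by
      rw [hTdef, blockT_io2, map_add, map_add, hPio2, pi1_io2, add_zero]
      rfl
    have h2 : pi1 (T (P (io2 y))) = X (T1 (Q2 y)) - T0 (X (Q2 y)) := by
      rw [hPio2, hTdef, blockT_io2, map_add, pi1_io1, pi1_io2, add_zero]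
    rw [← h1, hPT, h2]
  -- nontriviality of the corner operator
  have hDne : ∃ y, X (T1 y) - T0 (X y) ≠ 0 := by
    by_contra hcon
    push_neg at hcon
    apply hXT
    refine ContinuousLinearMap.ext fun y => ?_
    have := hcon y
    rw [sub_eq_zero] at this
    simpa using this
  obtain ⟨y0, hy0⟩ := hDne
  -- apply irreducibility of T0 and T1
  rcases proj_trivial T0 Q1 hIrr0 hQ1s hQ1i hQ1c with h1 | h1 <;>
    rcases proj_trivial T1 Q2 hIrr1 hQ2s hQ2i hQ2c with h2 | h2
  · -- Q1 = 0, Q2 = 0 : K = ⊥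
    left
    rw [Submodule.eq_bot_iff]
    intro z hz
    have hPz : P z = z := hPid z hz
    have : P z = 0 := by
      conv_lhs => rw [h2_decomp z]
      rw [map_add, hPio1, hPio2, h1, h2]
      simp
    rw [hPz] at this
    exact this
  · -- Q1 = 0, Q2 = 1 : contradiction
    exfalso
    apply hy0
    have := hQ12 y0
    rw [h2, h1] at this
    exact this.symm
  · -- Q1 = 1, Q2 = 0 : contradiction
    exfalso
    apply hy0
    have := hQ12 y0
    rw [h1] at this
    rw [h2] at this
    simpa using this
  · -- Q1 = 1, Q2 = 1 : K = ⊤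
    right
    rw [Submodule.eq_top_iff']
    intro z
    have : P z = z := by
      conv_lhs => rw [h2_decomp z]
      rw [map_add, hPio1, hPio2, h1, h2, ← h2_decomp z]
    rw [← this]
    exact hPmem z
end
end
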